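/- arXiv:1403.3109 — 3 statements merged into one kernel-verified Lean document; each statement's English description precedes it below -/
import Mathlib

section
/- In the discrete support-recovery model, let T be the true salient K-set and T′ another K-set with |T \ T′| = i (1 ≤ i ≤ K). Fix a realization θ^N = t, X^N_T = x (an N×K matrix of columns indexed by T), and Y^N = y with P(y | x) > 0. Then for every s > 0, the conditional probability, given (X^N_T = x, Y^N = y, θ^N = t), that P(Y^N | X^N_{T′}) ≥ P(Y^N | X^N_T) is at most Σ_{x′ ∈ 𝒳^{N×i}} Q^{⊗}(x′ | t) · ( P(y | (x_{T∩T′}, x′)) / P(y | x) )^s, where x_{T∩T′} denotes the N×(K−i) submatrix of x consisting of the columns indexed by T∩T′ and (x_{T∩T′}, x′) the N×K matrix obtained by adjoining the columns x′. -/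
open Finset

noncomputable section

variable {𝒳 𝒴 Θ : Type}

/-- The i.i.d. product pmf of the latent parameters over `N` samples. -/
def prodPMF (N : ℕ) (pri : Θ → ℝ) (t : Fin N → Θ) : ℝ := ∏ n, pri (t n)

/-- The conditionally i.i.d. pmf of an `N × m` matrix of variables given latent parameters. -/
def prodQ (N m : ℕ) (Q : Θ → 𝒳 → ℝ) (t : Fin N → Θ) (x : Fin N → Fin m → 𝒳) : ℝ :=
  ∏ n, ∏ k, Q (t n) (x n k)

/-- Replace the columns of the full matrix `x` indexed by the `i`-element set `A` by the
columns of the `N × i` matrix `x'` (in increasing order of the indices), keeping all other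
columns of `x`. -/
def mergeCols {𝒳 : Type} {D N i : ℕ} (A : Finset (Fin D)) (hA : A.card = i)
    (x : Fin N → Fin D → 𝒳) (x' : Fin N → Fin i → 𝒳) : Fin N → Fin D → 𝒳 :=
  fun n j => if h : j ∈ A then x' n ((A.orderIsoOfFin hA).symm ⟨j, h⟩) else x n j

/-! ### Auxiliary lemmas -/

lemma sum_prod_fun {ι κ : Type} [Fintype ι] [DecidableEq ι] [Fintype κ] (g : ι → κ → ℝ) :
    ∑ v : ι → κ, ∏ j, g j (v j) = ∏ j, ∑ c, g j c := by
  rw [Finset.prod_univ_sum, Fintype.piFinset_univ]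

/-- Summing the product pmf over all matrices whose columns in `A` are pinned to those of `w`
gives the product of the pinned columns' probabilities. -/
lemma sum_prodQ_fixed [Fintype 𝒳] [DecidableEq 𝒳] (D N : ℕ) (Q : Θ → 𝒳 → ℝ)
    (hQ1 : ∀ t, ∑ a, Q t a = 1) (t : Fin N → Θ) (A : Finset (Fin D)) (w : Fin N → Fin D → 𝒳) :
    ∑ z : Fin N → Fin D → 𝒳,
      (if ∀ n, ∀ j ∈ A, z n j = w n j then (1:ℝ) else 0) * prodQ N D Q t z
      = ∏ j ∈ A, ∏ n, Q (t n) (w n j) := by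
  classical
  rw [← Equiv.sum_comp (Equiv.piComm fun (_ : Fin D) (_ : Fin N) => 𝒳)]
  simp only [Equiv.piComm, Equiv.coe_fn_mk, Function.swap]
  have hterm : ∀ v : Fin D → Fin N → 𝒳,
      (if ∀ n, ∀ j ∈ A, v j n = w n j then (1:ℝ) else 0) * prodQ N D Q t (fun n j => v j n)
      = ∏ j, ((if (j ∈ A → v j = fun n => w n j) then (1:ℝ) else 0) * ∏ n, Q (t n) (v j n)) := by
    intro v
    by_cases h : ∀ n, ∀ j ∈ A, v j n = w n j
    · have h2 : ∀ j : Fin D, (if (j ∈ A → v j = fun n => w n j) then (1:ℝ) else 0) = 1 := by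
        intro j
        apply if_pos
        intro hj; funext n; exact h n j hj
      rw [if_pos h, one_mul]
      simp only [h2, one_mul, prodQ]
      exact Finset.prod_comm (f := fun n j => Q (t n) (v j n))
    · rw [if_neg h, zero_mul]
      push_neg at h
      obtain ⟨n, j, hj, hne⟩ := h
      refine (Finset.prod_eq_zero (Finset.mem_univ j) ?_).symm
      have : ¬ (j ∈ A → v j = fun n => w n j) := by
        intro hc
        exact hne (congrFun (hc hj) n)
      rw [if_neg this, zero_mul]
  refine Eq.trans (Fintype.sum_congr _ (fun v => ∏ j, ((if (j ∈ A → v j = fun n => w n j) then (1:ℝ) else 0) *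
    ∏ n, Q (t n) (v j n))) (fun v => by convert hterm v using 2; congr)) ?_
  rw [sum_prod_fun (fun j c => (if (j ∈ A → c = fun n => w n j) then (1:ℝ) else 0) *
      ∏ n, Q (t n) (c n))]
  have hcol : ∀ j : Fin D, (∑ c : Fin N → 𝒳,
      (if (j ∈ A → c = fun n => w n j) then (1:ℝ) else 0) * ∏ n, Q (t n) (c n))
      = if j ∈ A then ∏ n, Q (t n) (w n j) else 1 := by
    intro j
    by_cases hj : j ∈ A
    · simp [hj, ite_mul, Finset.sum_ite_eq']
    · have h1 : ∀ c : Fin N → 𝒳, (if (j ∈ A → c = fun n => w n j) then (1:ℝ) else 0) = 1 :=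
        fun c => if_pos (fun h => absurd h hj)
      simp only [h1, one_mul, if_neg hj]
      rw [sum_prod_fun (fun n a => Q (t n) a)]
      simp [hQ1]
  rw [Finset.prod_congr rfl (fun j _ => hcol j)]
  rw [Fintype.prod_ite_mem]

lemma prod_merge {D N i : ℕ} (A : Finset (Fin D)) (hA : A.card = i)
    (x : Fin N → Fin D → 𝒳) (x' : Fin N → Fin i → 𝒳) (g : Fin N → 𝒳 → ℝ) :
    ∏ j ∈ A, ∏ n, g n (mergeCols A hA x x' n j) = ∏ k : Fin i, ∏ n, g n (x' n k) := by
  rw [← Finset.prod_coe_sort]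
  refine (Fintype.prod_equiv (A.orderIsoOfFin hA).toEquiv _ _ ?_).symm
  intro k
  apply Finset.prod_congr rfl
  intro n _
  have hmem : ((A.orderIsoOfFin hA) k : Fin D) ∈ A := ((A.orderIsoOfFin hA) k).2
  show g n (x' n k) = g n (mergeCols A hA x x' n ((A.orderIsoOfFin hA) k : Fin D))
  simp only [mergeCols]
  rw [dif_pos hmem, Subtype.coe_eta, OrderIso.symm_apply_apply]

lemma orderEmbOfFin_symm_apply' {α : Type} [LinearOrder α] (A : Finset α) {i : ℕ}
    (hA : A.card = i) (j : α) (h : j ∈ A) :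
    A.orderEmbOfFin hA ((A.orderIsoOfFin hA).symm ⟨j, h⟩) = j := by
  have h1 := A.coe_orderIsoOfFin_apply hA ((A.orderIsoOfFin hA).symm ⟨j, h⟩)
  rw [OrderIso.apply_symm_apply] at h1
  exact h1.symm

theorem statement1
    [Fintype 𝒳] [Fintype 𝒴] [Fintype Θ] [DecidableEq 𝒳]
    (D K N i : ℕ) (hK : 1 ≤ K) (hD : 2 * K ≤ D) (hN : 1 ≤ N) (hi1 : 1 ≤ i) (hiK : i ≤ K)
    (pri : Θ → ℝ) (hpri0 : ∀ t, 0 ≤ pri t) (hpri1 : ∑ t, pri t = 1)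
    (Q : Θ → 𝒳 → ℝ) (hQ0 : ∀ t x, 0 ≤ Q t x) (hQ1 : ∀ t, ∑ x, Q t x = 1)
    (P : (Fin N → Fin K → 𝒳) → (Fin N → 𝒴) → ℝ)
    (hP0 : ∀ x y, 0 ≤ P x y) (hP1 : ∀ x, ∑ y, P x y = 1)
    (hPsym : ∀ (e : Equiv.Perm (Fin K)) (x : Fin N → Fin K → 𝒳) (y : Fin N → 𝒴),
      P (fun n k => x n (e k)) y = P x y)
    (T T' : Finset (Fin D)) (hT : T.card = K) (hT' : T'.card = K)
    (hTT' : (T \ T').card = i) (hT'T : (T' \ T).card = i)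
    (t : Fin N → Θ) (x : Fin N → Fin D → 𝒳) (y : Fin N → 𝒴)
    (hpos : 0 < P (fun n k => x n (T.orderEmbOfFin hT k)) y)
    (s : ℝ) (hs : 0 < s) :
    (∑ z : Fin N → Fin D → 𝒳,
        (if (∀ n, ∀ j ∈ T, z n j = x n j) ∧
              P (fun n k => z n (T.orderEmbOfFin hT k)) y ≤
                P (fun n k => z n (T'.orderEmbOfFin hT' k)) y then (1:ℝ) else 0) *
          (prodPMF N pri t * (prodQ N D Q t z *
            P (fun n k => z n (T.orderEmbOfFin hT k)) y))) /
      (∑ z : Fin N → Fin D → 𝒳,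
        (if (∀ n, ∀ j ∈ T, z n j = x n j) then (1:ℝ) else 0) *
          (prodPMF N pri t * (prodQ N D Q t z *
            P (fun n k => z n (T.orderEmbOfFin hT k)) y))) ≤
    ∑ x' : Fin N → Fin i → 𝒳, prodQ N i Q t x' *
      (P (fun n k => mergeCols (T' \ T) hT'T x x' n (T'.orderEmbOfFin hT' k)) y /
        P (fun n k => x n (T.orderEmbOfFin hT k)) y) ^ s := by
  classical
  set C : ℝ := P (fun n k => x n (T.orderEmbOfFin hT k)) y with hC
  set cp : ℝ := prodPMF N pri t with hcp
  set CT : ℝ := ∏ j ∈ T, ∏ n, Q (t n) (x n j) with hCT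
  have hcp0 : 0 ≤ cp := Finset.prod_nonneg fun n _ => hpri0 _
  have hQz0 : ∀ (m : ℕ) (z : Fin N → Fin m → 𝒳), 0 ≤ prodQ N m Q t z := fun m z =>
    Finset.prod_nonneg fun n _ => Finset.prod_nonneg fun k _ => hQ0 _ _
  have hCT0 : 0 ≤ CT :=
    Finset.prod_nonneg fun j _ => Finset.prod_nonneg fun n _ => hQ0 _ _
  -- notation for the RHS summand pieces
  set r : (Fin N → Fin i → 𝒳) → ℝ := fun x' =>
    P (fun n k => mergeCols (T' \ T) hT'T x x' n (T'.orderEmbOfFin hT' k)) y / C with hrdef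
  have hr0 : ∀ x', 0 ≤ r x' := fun x' => div_nonneg (hP0 _ _) hpos.le
  have hRHS0 : 0 ≤ ∑ x' : Fin N → Fin i → 𝒳, prodQ N i Q t x' * r x' ^ s :=
    Finset.sum_nonneg fun x' _ => mul_nonneg (hQz0 _ _) (Real.rpow_nonneg (hr0 x') s)
  -- the salient condition on the merged index set
  set B : Finset (Fin D) := T ∪ (T' \ T) with hB
  -- the denominator
  have hDenEq : (∑ z : Fin N → Fin D → 𝒳,
      (if (∀ n, ∀ j ∈ T, z n j = x n j) then (1:ℝ) else 0) *
        (cp * (prodQ N D Q t z * P (fun n k => z n (T.orderEmbOfFin hT k)) y)))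
      = cp * C * CT := by
    have hterm : ∀ z : Fin N → Fin D → 𝒳,
        (if (∀ n, ∀ j ∈ T, z n j = x n j) then (1:ℝ) else 0) *
          (cp * (prodQ N D Q t z * P (fun n k => z n (T.orderEmbOfFin hT k)) y))
        = (cp * C) * ((if (∀ n, ∀ j ∈ T, z n j = x n j) then (1:ℝ) else 0) *
            prodQ N D Q t z) := by
      intro z
      by_cases hz : ∀ n, ∀ j ∈ T, z n j = x n j
      · have hzP : (fun n k => z n (T.orderEmbOfFin hT k))
            = fun n k => x n (T.orderEmbOfFin hT k) := by
          funext n k; exact hz n _ (Finset.orderEmbOfFin_mem T hT k)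
        rw [if_pos hz, hzP, ← hC]; ring
      · rw [if_neg hz]; ring
    rw [Finset.sum_congr rfl (fun z _ => hterm z), ← Finset.mul_sum,
      sum_prodQ_fixed D N Q hQ1 t T x, ← hCT]
  -- the key pointwise (Chernoff) bound on the numerator
  have hNumle : (∑ z : Fin N → Fin D → 𝒳,
      (if (∀ n, ∀ j ∈ T, z n j = x n j) ∧
            P (fun n k => z n (T.orderEmbOfFin hT k)) y ≤
              P (fun n k => z n (T'.orderEmbOfFin hT' k)) y then (1:ℝ) else 0) *
        (cp * (prodQ N D Q t z * P (fun n k => z n (T.orderEmbOfFin hT k)) y)))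
      ≤ ∑ z : Fin N → Fin D → 𝒳, ∑ x' : Fin N → Fin i → 𝒳,
          (if (∀ n, ∀ j ∈ B, z n j = mergeCols (T' \ T) hT'T x x' n j) then (1:ℝ) else 0) *
            ((cp * C * r x' ^ s) * prodQ N D Q t z) := by
    apply Finset.sum_le_sum
    intro z _
    have hinner0 : ∀ x' : Fin N → Fin i → 𝒳, 0 ≤
        (if (∀ n, ∀ j ∈ B, z n j = mergeCols (T' \ T) hT'T x x' n j) then (1:ℝ) else 0) *
          ((cp * C * r x' ^ s) * prodQ N D Q t z) := by
      intro x'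
      apply mul_nonneg
      · split <;> norm_num
      · exact mul_nonneg (mul_nonneg (mul_nonneg hcp0 hpos.le)
          (Real.rpow_nonneg (hr0 x') s)) (hQz0 _ _)
    by_cases hz : (∀ n, ∀ j ∈ T, z n j = x n j) ∧
        P (fun n k => z n (T.orderEmbOfFin hT k)) y ≤
          P (fun n k => z n (T'.orderEmbOfFin hT' k)) y
    · obtain ⟨hzT, hzle⟩ := hz
      set ex : Fin N → Fin i → 𝒳 := fun n k => z n ((T' \ T).orderEmbOfFin hT'T k) with hex
      have hzP : (fun n k => z n (T.orderEmbOfFin hT k))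
          = fun n k => x n (T.orderEmbOfFin hT k) := by
        funext n k; exact hzT n _ (Finset.orderEmbOfFin_mem T hT k)
      -- the merged matrix built from `ex` agrees with `z` on the `B`-columns
      have hagg : ∀ n, ∀ j ∈ B, z n j = mergeCols (T' \ T) hT'T x ex n j := by
        intro n j hj
        rcases Finset.mem_union.mp hj with hjT | hjS
        · have hjS' : j ∉ T' \ T := fun hc => (Finset.mem_sdiff.mp hc).2 hjT
          simp only [mergeCols, dif_neg hjS']
          exact hzT n j hjT
        · simp only [mergeCols, dif_pos hjS]
          show z n j = z n ((T' \ T).orderEmbOfFin hT'T (((T' \ T).orderIsoOfFin hT'T).symm ⟨j, hjS⟩))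
          rw [orderEmbOfFin_symm_apply']
      have hmergeT' : (fun n k => mergeCols (T' \ T) hT'T x ex n (T'.orderEmbOfFin hT' k))
          = fun n k => z n (T'.orderEmbOfFin hT' k) := by
        funext n k
        have hjT' : T'.orderEmbOfFin hT' k ∈ T' := Finset.orderEmbOfFin_mem T' hT' k
        by_cases hjS : T'.orderEmbOfFin hT' k ∈ T' \ T
        · simp only [mergeCols, dif_pos hjS]
          show z n ((T' \ T).orderEmbOfFin hT'T
              (((T' \ T).orderIsoOfFin hT'T).symm ⟨T'.orderEmbOfFin hT' k, hjS⟩))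
            = z n (T'.orderEmbOfFin hT' k)
          rw [orderEmbOfFin_symm_apply']
        · have hjT : T'.orderEmbOfFin hT' k ∈ T := by
            by_contra h
            exact hjS (Finset.mem_sdiff.mpr ⟨hjT', h⟩)
          simp only [mergeCols, dif_neg hjS]
          exact (hzT n _ hjT).symm
      have hrle : 1 ≤ r ex := by
        rw [hrdef]
        simp only
        rw [hmergeT', le_div_iff₀ hpos]
        rw [hzP] at hzle
        rw [← hC] at hzle
        simpa using hzle
      have hrs1 : 1 ≤ r ex ^ s := by
        have h := Real.rpow_le_rpow (by norm_num : (0:ℝ) ≤ 1) hrle hs.le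
        rwa [Real.one_rpow] at h
      have hle : (if (∀ n, ∀ j ∈ T, z n j = x n j) ∧
            P (fun n k => z n (T.orderEmbOfFin hT k)) y ≤
              P (fun n k => z n (T'.orderEmbOfFin hT' k)) y then (1:ℝ) else 0) *
          (cp * (prodQ N D Q t z * P (fun n k => z n (T.orderEmbOfFin hT k)) y))
          ≤ (if (∀ n, ∀ j ∈ B, z n j = mergeCols (T' \ T) hT'T x ex n j) then (1:ℝ) else 0) *
            ((cp * C * r ex ^ s) * prodQ N D Q t z) := by
        rw [if_pos ⟨hzT, hzle⟩, if_pos hagg, hzP, ← hC, one_mul, one_mul]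
        have h0 : 0 ≤ cp * (prodQ N D Q t z * C) :=
          mul_nonneg hcp0 (mul_nonneg (hQz0 _ _) hpos.le)
        calc cp * (prodQ N D Q t z * C) = (cp * (prodQ N D Q t z * C)) * 1 := by ring
          _ ≤ (cp * (prodQ N D Q t z * C)) * (r ex ^ s) :=
              mul_le_mul_of_nonneg_left hrs1 h0
          _ = (cp * C * r ex ^ s) * prodQ N D Q t z := by ring
      exact hle.trans (Finset.single_le_sum (fun x' _ => hinner0 x') (Finset.mem_univ ex))
    · rw [if_neg hz, zero_mul]
      exact Finset.sum_nonneg fun x' _ => hinner0 x'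
  -- evaluate the upper bound
  have hNum2 : (∑ z : Fin N → Fin D → 𝒳, ∑ x' : Fin N → Fin i → 𝒳,
      (if (∀ n, ∀ j ∈ B, z n j = mergeCols (T' \ T) hT'T x x' n j) then (1:ℝ) else 0) *
        ((cp * C * r x' ^ s) * prodQ N D Q t z))
      = (∑ x' : Fin N → Fin i → 𝒳, prodQ N i Q t x' * r x' ^ s) * (cp * C * CT) := by
    rw [Finset.sum_comm]
    have hx' : ∀ x' : Fin N → Fin i → 𝒳, (∑ z : Fin N → Fin D → 𝒳,
        (if (∀ n, ∀ j ∈ B, z n j = mergeCols (T' \ T) hT'T x x' n j) then (1:ℝ) else 0) *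
          ((cp * C * r x' ^ s) * prodQ N D Q t z))
        = (prodQ N i Q t x' * r x' ^ s) * (cp * C * CT) := by
      intro x'
      have hterm : ∀ z : Fin N → Fin D → 𝒳,
          (if (∀ n, ∀ j ∈ B, z n j = mergeCols (T' \ T) hT'T x x' n j) then (1:ℝ) else 0) *
            ((cp * C * r x' ^ s) * prodQ N D Q t z)
          = (cp * C * r x' ^ s) *
              ((if (∀ n, ∀ j ∈ B, z n j = mergeCols (T' \ T) hT'T x x' n j) then (1:ℝ) else 0) *
                prodQ N D Q t z) := by
        intro z; ring
      rw [Finset.sum_congr rfl (fun z _ => hterm z), ← Finset.mul_sum,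
        sum_prodQ_fixed D N Q hQ1 t B (mergeCols (T' \ T) hT'T x x')]
      have hsplit : ∏ j ∈ B, ∏ n, Q (t n) (mergeCols (T' \ T) hT'T x x' n j)
          = CT * prodQ N i Q t x' := by
        rw [hB, Finset.prod_union Finset.disjoint_sdiff]
        have h1 : ∏ j ∈ T, ∏ n, Q (t n) (mergeCols (T' \ T) hT'T x x' n j) = CT := by
          rw [hCT]
          apply Finset.prod_congr rfl
          intro j hj
          apply Finset.prod_congr rfl
          intro n _
          have hjS' : j ∉ T' \ T := fun hc => (Finset.mem_sdiff.mp hc).2 hj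
          simp only [mergeCols, dif_neg hjS']
        have h2 : ∏ j ∈ T' \ T, ∏ n, Q (t n) (mergeCols (T' \ T) hT'T x x' n j)
            = prodQ N i Q t x' := by
          rw [prod_merge (T' \ T) hT'T x x' (fun n a => Q (t n) a)]
          exact (Finset.prod_comm (f := fun n k => Q (t n) (x' n k))).symm
        rw [h1, h2]
      rw [hsplit]
      ring
    rw [Finset.sum_congr rfl (fun x' _ => hx' x'), Finset.sum_mul]
  -- put everything together
  have hDen0 : 0 ≤ ∑ z : Fin N → Fin D → 𝒳,
      (if (∀ n, ∀ j ∈ T, z n j = x n j) then (1:ℝ) else 0) *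
        (cp * (prodQ N D Q t z * P (fun n k => z n (T.orderEmbOfFin hT k)) y)) := by
    apply Finset.sum_nonneg
    intro z _
    apply mul_nonneg
    · split <;> norm_num
    · exact mul_nonneg hcp0 (mul_nonneg (hQz0 _ _) (hP0 _ _))
  rcases hDen0.eq_or_lt with hd | hd
  · rw [← hd, div_zero]
    exact hRHS0
  · rw [div_le_iff₀ hd]
    calc (∑ z : Fin N → Fin D → 𝒳,
        (if (∀ n, ∀ j ∈ T, z n j = x n j) ∧
              P (fun n k => z n (T.orderEmbOfFin hT k)) y ≤
                P (fun n k => z n (T'.orderEmbOfFin hT' k)) y then (1:ℝ) else 0) *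
          (cp * (prodQ N D Q t z * P (fun n k => z n (T.orderEmbOfFin hT k)) y)))
        ≤ ∑ z : Fin N → Fin D → 𝒳, ∑ x' : Fin N → Fin i → 𝒳,
          (if (∀ n, ∀ j ∈ B, z n j = mergeCols (T' \ T) hT'T x x' n j) then (1:ℝ) else 0) *
            ((cp * C * r x' ^ s) * prodQ N D Q t z) := hNumle
      _ = (∑ x' : Fin N → Fin i → 𝒳, prodQ N i Q t x' * r x' ^ s) * (cp * C * CT) := hNum2
      _ = (∑ x' : Fin N → Fin i → 𝒳, prodQ N i Q t x' * r x' ^ s) *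
          (∑ z : Fin N → Fin D → 𝒳,
            (if (∀ n, ∀ j ∈ T, z n j = x n j) then (1:ℝ) else 0) *
              (cp * (prodQ N D Q t z * P (fun n k => z n (T.orderEmbOfFin hT k)) y))) := by
          rw [hDenEq]
end
end

section
/- In the discrete support-recovery model, fix i ∈ {1,…,K}, a K-element set T ⊂ {1,…,D}, and a partition T = T₁ ∪ T₂ with |T₁| = i. Let Ĩ_i = I(X^N_{T₁}; Y^N | X^N_{T₂}, θ^N) denote the conditional mutual information (base 2), computed under the joint law in which the salient set equals T, i.e. Y^N ∼ P(· | X_T^N). Then for every estimator ŝ = g(X^N, Y^N) (an arbitrary function of the data), the error probability under the model with uniformly random salient set S satisfies Pr[ŝ ≠ S] ≥ 1 − (Ĩ_i + 1)/log₂ C(D−K+i, i). -/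
open Finset

noncomputable section

variable {𝒳 𝒴 Θ : Type}

/-- The `K`-element subsets of `{1, …, D}`. -/
abbrev KSets (D K : ℕ) := {S : Finset (Fin D) // S.card = K}

/-- The `N × K` submatrix of columns indexed by the `K`-set `S`. -/
def cols {D K N : ℕ} (S : KSets D K) (x : Fin N → Fin D → 𝒳) : Fin N → Fin K → 𝒳 :=
  fun n k => x n (S.1.orderEmbOfFin S.2 k)

/-- Assemble the `N × K` matrix of columns of the true set `T` from the values `u` on the
partition block `T₁` (of size `i`) and the values `w` on `T₂ = T \ T₁` (of size `K - i`). -/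
def assembleT {𝒳 : Type} {D K N i : ℕ} (T T₁ : Finset (Fin D)) (hT : T.card = K)
    (hT1 : T₁.card = i) (hT2 : (T \ T₁).card = K - i)
    (u : Fin N → Fin i → 𝒳) (w : Fin N → Fin (K - i) → 𝒳) : Fin N → Fin K → 𝒳 :=
  fun n k =>
    if h : T.orderEmbOfFin hT k ∈ T₁ then
      u n ((T₁.orderIsoOfFin hT1).symm ⟨T.orderEmbOfFin hT k, h⟩)
    else
      w n (((T \ T₁).orderIsoOfFin hT2).symm
        ⟨T.orderEmbOfFin hT k, Finset.mem_sdiff.mpr ⟨T.orderEmbOfFin_mem hT k, h⟩⟩)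

def colsOf {D N m : ℕ} (A : Finset (Fin D)) (hA : A.card = m) (x : Fin N → Fin D → 𝒳) :
    Fin N → Fin m → 𝒳 := fun n k => x n (A.orderEmbOfFin hA k)



lemma logSum {ι : Type*} (s : Finset ι) (a b : ι → ℝ)
    (ha : ∀ i ∈ s, 0 ≤ a i) (hb : ∀ i ∈ s, 0 ≤ b i)
    (hd : ∀ i ∈ s, b i = 0 → a i = 0) :
    (∑ i ∈ s, a i) * Real.log ((∑ i ∈ s, a i) / (∑ i ∈ s, b i)) ≤
      ∑ i ∈ s, a i * Real.log (a i / b i) := by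
  set A := ∑ i ∈ s, a i with hA
  set B := ∑ i ∈ s, b i with hB
  by_cases hA0 : A = 0
  · have hz : ∀ i ∈ s, a i = 0 :=
      (Finset.sum_eq_zero_iff_of_nonneg ha).1 (by rw [← hA]; exact hA0)
    rw [hA0, Finset.sum_congr rfl (fun i hi => by rw [hz i hi, zero_mul])]
    simp
  · have hApos : 0 < A := lt_of_le_of_ne (Finset.sum_nonneg ha) (Ne.symm hA0)
    have hB0 : B ≠ 0 := by
      intro h
      have hzb : ∀ i ∈ s, b i = 0 := (Finset.sum_eq_zero_iff_of_nonneg hb).1 (by rw [← hB]; exact h)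
      exact hA0 (by rw [hA]; exact Finset.sum_eq_zero (fun i hi => hd i hi (hzb i hi)))
    have hBpos : 0 < B := lt_of_le_of_ne (Finset.sum_nonneg hb) (Ne.symm hB0)
    have key : ∀ i ∈ s, a i * Real.log (A / B) + (a i - b i * (A / B)) ≤ a i * Real.log (a i / b i) := by
      intro i hi
      rcases eq_or_lt_of_le (ha i hi) with h0 | hpos
      · rw [← h0]
        simp only [zero_mul, zero_sub, zero_add]
        have : 0 ≤ b i * (A / B) := mul_nonneg (hb i hi) (le_of_lt (div_pos hApos hBpos))
        linarith
      · have hbpos : 0 < b i := by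
          rcases eq_or_lt_of_le (hb i hi) with h0 | h; · exact absurd (hd i hi h0.symm) (by linarith)
          exact h
        have hx : 0 < b i * A / (a i * B) := by positivity
        have hlog := Real.log_le_sub_one_of_pos hx
        have e1 : Real.log (b i * A / (a i * B)) = Real.log (A / B) - Real.log (a i / b i) := by
          rw [Real.log_div (by positivity) (by positivity), Real.log_div (ne_of_gt hApos) (ne_of_gt hBpos),
            Real.log_div (ne_of_gt hpos) (ne_of_gt hbpos), Real.log_mul (ne_of_gt hbpos) (ne_of_gt hApos),
            Real.log_mul (ne_of_gt hpos) (ne_of_gt hBpos)]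
          ring
        have h2 : Real.log (A / B) - Real.log (a i / b i) ≤ b i * A / (a i * B) - 1 := e1 ▸ hlog
        have h3 : a i * (Real.log (A / B) - Real.log (a i / b i)) ≤ a i * (b i * A / (a i * B) - 1) :=
          mul_le_mul_of_nonneg_left h2 (le_of_lt hpos)
        have h4 : a i * (b i * A / (a i * B) - 1) = b i * (A / B) - a i := by
          field_simp
        nlinarith [h3, h4]
    calc A * Real.log (A / B) = ∑ i ∈ s, (a i * Real.log (A / B) + (a i - b i * (A / B))) := by
          rw [Finset.sum_add_distrib, ← Finset.sum_mul, Finset.sum_sub_distrib, ← Finset.sum_mul]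
          rw [← hA, ← hB]
          field_simp
          ring
      _ ≤ ∑ i ∈ s, a i * Real.log (a i / b i) := Finset.sum_le_sum key

lemma logSumb {ι : Type*} (s : Finset ι) (a b : ι → ℝ)
    (ha : ∀ i ∈ s, 0 ≤ a i) (hb : ∀ i ∈ s, 0 ≤ b i)
    (hd : ∀ i ∈ s, b i = 0 → a i = 0) :
    (∑ i ∈ s, a i) * Real.logb 2 ((∑ i ∈ s, a i) / (∑ i ∈ s, b i)) ≤
      ∑ i ∈ s, a i * Real.logb 2 (a i / b i) := by
  have h := logSum s a b ha hb hd
  have h2 : (0:ℝ) < Real.log 2 := Real.log_pos (by norm_num)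
  simp only [Real.logb, div_eq_mul_inv]
  calc (∑ i ∈ s, a i) * (Real.log ((∑ i ∈ s, a i) / (∑ i ∈ s, b i)) * (Real.log 2)⁻¹)
      = ((∑ i ∈ s, a i) * Real.log ((∑ i ∈ s, a i) / (∑ i ∈ s, b i))) * (Real.log 2)⁻¹ := by ring
    _ ≤ (∑ i ∈ s, a i * Real.log (a i / b i)) * (Real.log 2)⁻¹ := by
        apply mul_le_mul_of_nonneg_right h (by positivity)
    _ = ∑ i ∈ s, a i * (Real.log (a i / b i) * (Real.log 2)⁻¹) := by
        rw [Finset.sum_mul]; exact Finset.sum_congr rfl (fun i _ => by ring)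

lemma fano_core {Z F : Type} [Fintype Z] [Fintype F] [DecidableEq F]
    (p : F → Z → ℝ) (q : Z → ℝ) (I : ℝ)
    (hp0 : ∀ s z, 0 ≤ p s z) (hp1 : ∀ s, ∑ z, p s z = 1)
    (hq0 : ∀ z, 0 ≤ q z) (hq1 : ∑ z, q z ≤ 1)
    (hdom : ∀ s z, q z = 0 → p s z = 0)
    (hKL : ∀ s, ∑ z, p s z * Real.logb 2 (p s z / q z) ≤ I)
    (est : Z → Option F)
    (hM : 2 ≤ Fintype.card F) :
    (1 - (I + 1) / Real.logb 2 (Fintype.card F)) * (Fintype.card F : ℝ) ≤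
      ∑ s : F, ∑ z, p s z * (if est z ≠ some s then 1 else 0) := by
  classical
  set M : ℝ := (Fintype.card F : ℝ) with hMdef
  have hM2 : (2:ℝ) ≤ M := by rw [hMdef]; exact_mod_cast hM
  have hMpos : (0:ℝ) < M := by linarith
  have hL : (1:ℝ) ≤ Real.logb 2 M := by
    rw [show (1:ℝ) = Real.logb 2 2 by simp]
    exact Real.logb_le_logb_of_le (by norm_num) (by norm_num) hM2
  have hLpos : (0:ℝ) < Real.logb 2 M := by linarith
  -- indicator bookkeeping
  set G : Finset (F × Z) := Finset.univ.filter (fun sz => est sz.2 = some sz.1) with hG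
  set A : ℝ := ∑ sz ∈ G, p sz.1 sz.2 with hAdef
  set B : ℝ := ∑ sz ∈ G, q sz.2 with hBdef
  have hA0 : 0 ≤ A := Finset.sum_nonneg (fun sz _ => hp0 _ _)
  have hB0 : 0 ≤ B := Finset.sum_nonneg (fun sz _ => hq0 _)
  -- B ≤ 1 : each z appears at most once in G
  have hB1 : B ≤ 1 := by
    have : B = ∑ z : Z, ∑ s : F, (if est z = some s then q z else 0) := by
      rw [hBdef, hG, Finset.sum_filter, Fintype.sum_prod_type]
      rw [Finset.sum_comm]
    rw [this]
    refine le_trans (Finset.sum_le_sum (fun z _ => ?_)) hq1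
    rcases h : est z with _ | s₀ <;> simp [h, Finset.sum_ite_eq', hq0 z]
  -- complement quantities
  set Gc : Finset (F × Z) := Finset.univ.filter (fun sz => ¬ est sz.2 = some sz.1) with hGc
  have hsplit : ∀ f : F × Z → ℝ, ∑ sz ∈ G, f sz + ∑ sz ∈ Gc, f sz = ∑ sz : F × Z, f sz := by
    intro f
    rw [hG, hGc]
    exact Finset.sum_filter_add_sum_filter_not _ _ _
  have hPtot : ∑ sz : F × Z, p sz.1 sz.2 = M := by
    rw [Fintype.sum_prod_type]
    rw [Finset.sum_congr rfl (fun s _ => hp1 s)]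
    simp [hMdef, mul_comm]
  have hQtot : ∑ sz : F × Z, q sz.2 ≤ M := by
    rw [Fintype.sum_prod_type]
    have : ∀ s : F, ∑ z, q z ≤ 1 := fun _ => hq1
    calc ∑ s : F, ∑ z, q z ≤ ∑ s : F, (1:ℝ) := Finset.sum_le_sum (fun s _ => hq1)
      _ = M := by simp [hMdef]
  set A' : ℝ := ∑ sz ∈ Gc, p sz.1 sz.2 with hA'def
  set B' : ℝ := ∑ sz ∈ Gc, q sz.2 with hB'def
  have hA'0 : 0 ≤ A' := Finset.sum_nonneg (fun sz _ => hp0 _ _)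
  have hB'0 : 0 ≤ B' := Finset.sum_nonneg (fun sz _ => hq0 _)
  have hAA' : A + A' = M := by rw [hAdef, hA'def, hsplit]; exact hPtot
  have hB'M : B' ≤ M := by
    have := hsplit (fun sz => q sz.2)
    have h2 : B + B' = ∑ sz : F × Z, q sz.2 := this
    linarith [hQtot, hB0]
  -- log-sum pieces
  have hKLsum : ∑ sz : F × Z, p sz.1 sz.2 * Real.logb 2 (p sz.1 sz.2 / q sz.2) ≤ M * I := by
    rw [Fintype.sum_prod_type]
    calc ∑ s : F, ∑ z, p s z * Real.logb 2 (p s z / q z) ≤ ∑ s : F, I :=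
          Finset.sum_le_sum (fun s _ => hKL s)
      _ = M * I := by simp [hMdef, mul_comm]
  have hls1 : A * Real.logb 2 (A / B) ≤ ∑ sz ∈ G, p sz.1 sz.2 * Real.logb 2 (p sz.1 sz.2 / q sz.2) :=
    logSumb G (fun sz => p sz.1 sz.2) (fun sz => q sz.2) (fun sz _ => hp0 _ _) (fun sz _ => hq0 _)
      (fun sz _ h => hdom _ _ h)
  have hls2 : A' * Real.logb 2 (A' / B') ≤ ∑ sz ∈ Gc, p sz.1 sz.2 * Real.logb 2 (p sz.1 sz.2 / q sz.2) :=
    logSumb Gc (fun sz => p sz.1 sz.2) (fun sz => q sz.2) (fun sz _ => hp0 _ _) (fun sz _ => hq0 _)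
      (fun sz _ h => hdom _ _ h)
  -- monotonicity in B, B'
  have hstep1 : A * Real.logb 2 A ≤ A * Real.logb 2 (A / B) := by
    rcases eq_or_lt_of_le hA0 with h0 | hpos
    · rw [← h0]; simp
    · have hBpos : 0 < B := by
        rcases eq_or_lt_of_le hB0 with h0 | h; swap; · exact h
        exfalso
        have hz : ∀ sz ∈ G, q sz.2 = 0 := (Finset.sum_eq_zero_iff_of_nonneg (fun sz _ => hq0 _)).1 h0.symm
        have : A = 0 := Finset.sum_eq_zero (fun sz hsz => hdom _ _ (hz sz hsz))
        linarith
      apply mul_le_mul_of_nonneg_left _ hA0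
      apply Real.logb_le_logb_of_le (by norm_num) hpos
      calc A = A / 1 := by ring
        _ ≤ A / B := div_le_div_of_nonneg_left hA0 hBpos hB1
  have hstep2 : A' * Real.logb 2 (A' / M) ≤ A' * Real.logb 2 (A' / B') := by
    rcases eq_or_lt_of_le hA'0 with h0 | hpos
    · rw [← h0]; simp
    · have hB'pos : 0 < B' := by
        rcases eq_or_lt_of_le hB'0 with h0 | h; swap; · exact h
        exfalso
        have hz : ∀ sz ∈ Gc, q sz.2 = 0 :=
          (Finset.sum_eq_zero_iff_of_nonneg (fun sz _ => hq0 _)).1 h0.symm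
        have : A' = 0 := Finset.sum_eq_zero (fun sz hsz => hdom _ _ (hz sz hsz))
        linarith
      apply mul_le_mul_of_nonneg_left _ hA'0
      apply Real.logb_le_logb_of_le (by norm_num) (by positivity)
      exact div_le_div_of_nonneg_left hA'0 hB'pos hB'M
  -- binary entropy bound
  have hAM : A ≤ M := by linarith
  have hent : A * Real.logb 2 (A / M) + A' * Real.logb 2 (A' / M) ≥ -M := by
    set x : ℝ := A / M with hxdef
    have hx0 : 0 ≤ x := by positivity
    have hx1 : x ≤ 1 := by rw [hxdef, div_le_one hMpos]; exact hAM
    have hA'x : A' = (1 - x) * M := by rw [hxdef]; field_simp; linarith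
    have hAx : A = x * M := by rw [hxdef]; field_simp
    have h1 : A' / M = 1 - x := by rw [hA'x]; field_simp
    have hbe : x * Real.log x + (1 - x) * Real.log (1 - x) ≥ -Real.log 2 := by
      have := Real.binEntropy_le_log_two (p := x)
      simp only [Real.binEntropy, Real.log_inv] at this
      linarith
    have hlog2 : (0:ℝ) < Real.log 2 := Real.log_pos (by norm_num)
    have expand : A * Real.logb 2 (A / M) + A' * Real.logb 2 (A' / M)
        = M * ((x * Real.log x + (1 - x) * Real.log (1 - x)) / Real.log 2) := by
      rw [h1, ← hxdef, hAx, hA'x]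
      simp only [Real.logb]
      field_simp
    rw [expand, ge_iff_le]
    rw [show -M = M * (-Real.log 2 / Real.log 2) by field_simp]
    apply mul_le_mul_of_nonneg_left _ (le_of_lt hMpos)
    exact (div_le_div_iff_of_pos_right hlog2).mpr hbe
  -- combine
  have hshift : A * Real.logb 2 A = A * Real.logb 2 M + A * Real.logb 2 (A / M) := by
    rcases eq_or_lt_of_le hA0 with h0 | hpos
    · rw [← h0]; simp
    · rw [Real.logb_div (ne_of_gt hpos) (ne_of_gt hMpos)]; ring
  have hmain : A * Real.logb 2 M - M ≤ M * I := by
    have c1 : A * Real.logb 2 (A / B) + A' * Real.logb 2 (A' / B') ≤ M * I := by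
      calc A * Real.logb 2 (A / B) + A' * Real.logb 2 (A' / B')
          ≤ (∑ sz ∈ G, p sz.1 sz.2 * Real.logb 2 (p sz.1 sz.2 / q sz.2)) +
            (∑ sz ∈ Gc, p sz.1 sz.2 * Real.logb 2 (p sz.1 sz.2 / q sz.2)) := add_le_add hls1 hls2
        _ = ∑ sz : F × Z, p sz.1 sz.2 * Real.logb 2 (p sz.1 sz.2 / q sz.2) := hsplit _
        _ ≤ M * I := hKLsum
    have c2 : A * Real.logb 2 A + A' * Real.logb 2 (A' / M) ≤ M * I := by
      calc A * Real.logb 2 A + A' * Real.logb 2 (A' / M)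
          ≤ A * Real.logb 2 (A / B) + A' * Real.logb 2 (A' / B') := add_le_add hstep1 hstep2
        _ ≤ M * I := c1
    rw [hshift] at c2
    linarith [hent]
  -- conclude
  have hAL : A * Real.logb 2 M ≤ M * (I + 1) := by linarith
  have hAc : A ≤ M * (I + 1) / Real.logb 2 M := by
    rw [le_div_iff₀ hLpos]
    exact hAL
  have hRHS : ∑ s : F, ∑ z, p s z * (if est z ≠ some s then 1 else 0) = M - A := by
    have e1 : ∑ s : F, ∑ z, p s z * (if est z ≠ some s then 1 else 0)
        = ∑ sz : F × Z, p sz.1 sz.2 * (if est sz.2 ≠ some sz.1 then 1 else 0) := by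
      rw [Fintype.sum_prod_type]
    have e2 : ∑ sz : F × Z, p sz.1 sz.2 * (if est sz.2 ≠ some sz.1 then 1 else 0) = A' := by
      rw [hA'def, Finset.sum_filter]
      apply Finset.sum_congr rfl
      intro sz _
      by_cases h : est sz.2 = some sz.1 <;> simp [h]
    rw [e1, e2]; linarith
  rw [hRHS]
  have hfinal : M * (I + 1) / Real.logb 2 M = (I + 1) / Real.logb 2 M * M := by ring
  nlinarith [hAc, hMpos]

lemma sum_fn_prod {ι α : Type*} [Fintype ι] [DecidableEq ι] [Fintype α] (f : ι → α → ℝ) :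
    ∑ g : ι → α, ∏ j, f j (g j) = ∏ j, ∑ a, f j a := by
  have h := Finset.prod_univ_sum (fun _ : ι => (Finset.univ : Finset α)) f
  rw [Fintype.piFinset_univ] at h
  exact h.symm


lemma emb_symm {D m : ℕ} (s : Finset (Fin D)) (h : s.card = m) (d : Fin D) (hd : d ∈ s) :
    s.orderEmbOfFin h ((s.orderIsoOfFin h).symm ⟨d, hd⟩) = d := by
  rw [← Finset.coe_orderIsoOfFin_apply, OrderIso.apply_symm_apply]

lemma iso_symm_emb {D m : ℕ} (s : Finset (Fin D)) (h : s.card = m) (k : Fin m)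
    (hm : s.orderEmbOfFin h k ∈ s) :
    (s.orderIsoOfFin h).symm ⟨s.orderEmbOfFin h k, hm⟩ = k := by
  rw [OrderIso.symm_apply_eq]
  exact Subtype.ext (Finset.coe_orderIsoOfFin_apply s h k).symm

lemma prod_emb {D m : ℕ} (s : Finset (Fin D)) (h : s.card = m) (g : Fin D → ℝ) :
    ∏ d ∈ s, g d = ∏ k : Fin m, g (s.orderEmbOfFin h k) := by
  refine (Finset.prod_bij (fun (k : Fin m) (_ : k ∈ Finset.univ) => s.orderEmbOfFin h k)
    (fun k _ => Finset.orderEmbOfFin_mem s h k) ?_ ?_ (fun k _ => rfl)).symm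
  · intro k _ k' _ hkk
    exact (s.orderEmbOfFin h).injective hkk
  · intro d hd
    refine ⟨(s.orderIsoOfFin h).symm ⟨d, hd⟩, Finset.mem_univ _, emb_symm s h d hd⟩

section build
variable {D N a b c : ℕ} (A B C : Finset (Fin D)) (hA : A.card = a) (hB : B.card = b)
  (hC : C.card = c) (hcov : ∀ d : Fin D, d ∈ A ∨ d ∈ B ∨ d ∈ C)

def buildX (u : Fin N → Fin a → 𝒳) (w : Fin N → Fin b → 𝒳) (r : Fin N → Fin c → 𝒳) :
    Fin N → Fin D → 𝒳 :=
  fun n d =>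
    if h : d ∈ A then u n ((A.orderIsoOfFin hA).symm ⟨d, h⟩)
    else if h' : d ∈ B then w n ((B.orderIsoOfFin hB).symm ⟨d, h'⟩)
    else r n ((C.orderIsoOfFin hC).symm ⟨d, ((hcov d).resolve_left h).resolve_left h'⟩)

lemma colsOf_buildX_A (u : Fin N → Fin a → 𝒳) (w : Fin N → Fin b → 𝒳) (r : Fin N → Fin c → 𝒳) :
    colsOf A hA (buildX A B C hA hB hC hcov u w r) = u := by
  funext n k
  unfold colsOf buildX
  rw [dif_pos (Finset.orderEmbOfFin_mem A hA k), iso_symm_emb]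

lemma colsOf_buildX_B (hAB : Disjoint A B) (u : Fin N → Fin a → 𝒳) (w : Fin N → Fin b → 𝒳) (r : Fin N → Fin c → 𝒳) :
    colsOf B hB (buildX A B C hA hB hC hcov u w r) = w := by
  funext n k
  unfold colsOf buildX
  have hmem := Finset.orderEmbOfFin_mem B hB k
  have hnA : B.orderEmbOfFin hB k ∉ A := fun hin => (Finset.disjoint_left.1 hAB hin) hmem
  rw [dif_neg hnA, dif_pos hmem, iso_symm_emb]

lemma colsOf_buildX_C (hAC : Disjoint A C) (hBC : Disjoint B C) (u : Fin N → Fin a → 𝒳) (w : Fin N → Fin b → 𝒳) (r : Fin N → Fin c → 𝒳) :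
    colsOf C hC (buildX A B C hA hB hC hcov u w r) = r := by
  funext n k
  unfold colsOf buildX
  have hmem := Finset.orderEmbOfFin_mem C hC k
  have hnA : C.orderEmbOfFin hC k ∉ A := fun hin => (Finset.disjoint_left.1 hAC hin) hmem
  have hnB : C.orderEmbOfFin hC k ∉ B := fun hin => (Finset.disjoint_left.1 hBC hin) hmem
  rw [dif_neg hnA, dif_neg hnB]
  congr 1
  exact iso_symm_emb C hC k hmem

lemma buildX_colsOf (x : Fin N → Fin D → 𝒳) :
    buildX A B C hA hB hC hcov (colsOf A hA x) (colsOf B hB x) (colsOf C hC x) = x := by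
  funext n d
  unfold buildX colsOf
  by_cases h : d ∈ A
  · rw [dif_pos h, emb_symm]
  by_cases h' : d ∈ B
  · rw [dif_neg h, dif_pos h', emb_symm]
  · rw [dif_neg h, dif_neg h', emb_symm]

lemma buildX_bijective (hAB : Disjoint A B) (hAC : Disjoint A C) (hBC : Disjoint B C) :
    Function.Bijective (fun uwr : (Fin N → Fin a → 𝒳) × (Fin N → Fin b → 𝒳) × (Fin N → Fin c → 𝒳)
      => buildX A B C hA hB hC hcov uwr.1 uwr.2.1 uwr.2.2) := by
  rw [Function.bijective_iff_has_inverse]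
  refine ⟨fun x => (colsOf A hA x, colsOf B hB x, colsOf C hC x), ?_, ?_⟩
  · intro uwr
    refine Prod.ext ?_ (Prod.ext ?_ ?_)
    · exact colsOf_buildX_A A B C hA hB hC hcov _ _ _
    · exact colsOf_buildX_B A B C hA hB hC hcov hAB _ _ _
    · exact colsOf_buildX_C A B C hA hB hC hcov hAC hBC _ _ _
  · intro x
    exact buildX_colsOf A B C hA hB hC hcov x

lemma prodQ_buildX (hAB : Disjoint A B) (hAC : Disjoint A C) (hBC : Disjoint B C) (Q : Θ → 𝒳 → ℝ) (t : Fin N → Θ)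
    (u : Fin N → Fin a → 𝒳) (w : Fin N → Fin b → 𝒳) (r : Fin N → Fin c → 𝒳)
    (hunion : A ∪ B ∪ C = Finset.univ) :
    prodQ N D Q t (buildX A B C hA hB hC hcov u w r)
      = prodQ N a Q t u * prodQ N b Q t w * prodQ N c Q t r := by
  unfold prodQ
  rw [← Finset.prod_mul_distrib, ← Finset.prod_mul_distrib]
  apply Finset.prod_congr rfl
  intro n _
  have hsplit : ∏ d : Fin D, Q (t n) (buildX A B C hA hB hC hcov u w r n d)
      = ((∏ d ∈ A, Q (t n) (buildX A B C hA hB hC hcov u w r n d))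
        * ∏ d ∈ B, Q (t n) (buildX A B C hA hB hC hcov u w r n d))
        * ∏ d ∈ C, Q (t n) (buildX A B C hA hB hC hcov u w r n d) := by
    rw [← Finset.prod_union hAB, ← Finset.prod_union (Finset.disjoint_union_left.2 ⟨hAC, hBC⟩),
      hunion]
  rw [hsplit]
  congr 1
  · congr 1
    · rw [prod_emb A hA]
      exact Finset.prod_congr rfl (fun k _ =>
        congrArg (Q (t n)) (congrFun (congrFun (colsOf_buildX_A A B C hA hB hC hcov u w r) n) k))
    · rw [prod_emb B hB]
      exact Finset.prod_congr rfl (fun k _ =>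
        congrArg (Q (t n)) (congrFun (congrFun (colsOf_buildX_B A B C hA hB hC hcov hAB u w r) n) k))
  · rw [prod_emb C hC]
    exact Finset.prod_congr rfl (fun k _ =>
      congrArg (Q (t n)) (congrFun (congrFun (colsOf_buildX_C A B C hA hB hC hcov hAC hBC u w r) n) k))

lemma sum_buildX [Fintype 𝒳] (hAB : Disjoint A B) (hAC : Disjoint A C) (hBC : Disjoint B C) (f : (Fin N → Fin D → 𝒳) → ℝ) :
    ∑ x : Fin N → Fin D → 𝒳, f x
      = ∑ u : Fin N → Fin a → 𝒳, ∑ w : Fin N → Fin b → 𝒳, ∑ r : Fin N → Fin c → 𝒳,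
          f (buildX A B C hA hB hC hcov u w r) := by
  have h := Fintype.sum_bijective _
    (buildX_bijective A B C hA hB hC hcov hAB hAC hBC (𝒳 := 𝒳) (N := N))
    (fun uwr : (Fin N → Fin a → 𝒳) × (Fin N → Fin b → 𝒳) × (Fin N → Fin c → 𝒳)
      => f (buildX A B C hA hB hC hcov uwr.1 uwr.2.1 uwr.2.2)) f (fun uwr => rfl)
  rw [← h, Fintype.sum_prod_type]
  apply Finset.sum_congr rfl
  intro u _
  rw [Fintype.sum_prod_type]

end build
lemma P_assemble_eq {D K N i : ℕ} (P : (Fin N → Fin K → 𝒳) → (Fin N → 𝒴) → ℝ)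
    (hPsym : ∀ (e : Equiv.Perm (Fin K)) (x : Fin N → Fin K → 𝒳) (y : Fin N → 𝒴),
      P (fun n k => x n (e k)) y = P x y)
    (T T₁ : Finset (Fin D)) (hT : T.card = K) (hT1 : T₁.card = i) (hT2 : (T \ T₁).card = K - i)
    (S : KSets D K) (W : Finset (Fin D)) (hW : W.card = K - i) (hWS : W ⊆ S.1)
    (hSW : (S.1 \ W).card = i)
    (x : Fin N → Fin D → 𝒳) (y : Fin N → 𝒴) :
    P (assembleT T T₁ hT hT1 hT2 (colsOf (S.1 \ W) hSW x) (colsOf W hW x)) y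
      = P (cols S x) y := by
  classical
  set f1 : Fin K → Fin D := fun k =>
    if h : T.orderEmbOfFin hT k ∈ T₁ then
      (S.1 \ W).orderEmbOfFin hSW ((T₁.orderIsoOfFin hT1).symm ⟨T.orderEmbOfFin hT k, h⟩)
    else W.orderEmbOfFin hW (((T \ T₁).orderIsoOfFin hT2).symm
        ⟨T.orderEmbOfFin hT k, Finset.mem_sdiff.mpr ⟨T.orderEmbOfFin_mem hT k, h⟩⟩) with hf1
  have hmem : ∀ k, f1 k ∈ S.1 := by
    intro k
    rw [hf1]
    dsimp only
    split
    · exact Finset.sdiff_subset (Finset.orderEmbOfFin_mem _ hSW _)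
    · exact hWS (Finset.orderEmbOfFin_mem W hW _)
  have hinj : Function.Injective f1 := by
    intro k k' hkk
    rw [hf1] at hkk
    dsimp only at hkk
    by_cases h : T.orderEmbOfFin hT k ∈ T₁ <;> by_cases h' : T.orderEmbOfFin hT k' ∈ T₁
    · rw [dif_pos h, dif_pos h'] at hkk
      have h2 := ((S.1 \ W).orderEmbOfFin hSW).injective hkk
      have h3 := (T₁.orderIsoOfFin hT1).symm.injective h2
      have h4 := congrArg Subtype.val h3
      exact (T.orderEmbOfFin hT).injective h4
    · rw [dif_pos h, dif_neg h'] at hkk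
      exfalso
      have hin : f1 k ∈ S.1 \ W := by rw [hf1]; dsimp only; rw [dif_pos h]
                                      exact Finset.orderEmbOfFin_mem _ hSW _
      have hin' : (S.1 \ W).orderEmbOfFin hSW ((T₁.orderIsoOfFin hT1).symm ⟨T.orderEmbOfFin hT k, h⟩) ∈ S.1 \ W :=
        Finset.orderEmbOfFin_mem _ hSW _
      rw [hkk] at hin'
      exact (Finset.mem_sdiff.1 hin').2 (Finset.orderEmbOfFin_mem W hW _)
    · rw [dif_neg h, dif_pos h'] at hkk
      exfalso
      have hin' : (S.1 \ W).orderEmbOfFin hSW ((T₁.orderIsoOfFin hT1).symm ⟨T.orderEmbOfFin hT k', h'⟩) ∈ S.1 \ W :=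
        Finset.orderEmbOfFin_mem _ hSW _
      rw [← hkk] at hin'
      exact (Finset.mem_sdiff.1 hin').2 (Finset.orderEmbOfFin_mem W hW _)
    · rw [dif_neg h, dif_neg h'] at hkk
      have h2 := (W.orderEmbOfFin hW).injective hkk
      have h3 := ((T \ T₁).orderIsoOfFin hT2).symm.injective h2
      have h4 := congrArg Subtype.val h3
      exact (T.orderEmbOfFin hT).injective h4
  have heinj : Function.Injective (fun k => (S.1.orderIsoOfFin S.2).symm ⟨f1 k, hmem k⟩) := by
    intro k k' hkk
    have h2 := (S.1.orderIsoOfFin S.2).symm.injective hkk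
    exact hinj (congrArg Subtype.val h2)
  have hbij := Finite.injective_iff_bijective.1 heinj
  set σ : Equiv.Perm (Fin K) := Equiv.ofBijective _ hbij with hσ
  have hL : (assembleT T T₁ hT hT1 hT2 (colsOf (S.1 \ W) hSW x) (colsOf W hW x))
      = fun n k => cols S x n (σ k) := by
    funext n k
    have hc : cols S x n (σ k) = x n (f1 k) := by
      show x n (S.1.orderEmbOfFin S.2 ((S.1.orderIsoOfFin S.2).symm ⟨f1 k, hmem k⟩)) = x n (f1 k)
      rw [emb_symm]
    rw [hc, hf1]
    unfold assembleT colsOf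
    dsimp only
    by_cases h : T.orderEmbOfFin hT k ∈ T₁
    · rw [dif_pos h, dif_pos h]
    · rw [dif_neg h, dif_neg h]
  rw [hL, hPsym σ (cols S x) y]

variable [Fintype 𝒳] [Fintype 𝒴] [Fintype Θ]
lemma sum_prodPMF (N : ℕ) (pri : Θ → ℝ) (h1 : ∑ t, pri t = 1) :
    ∑ t : Fin N → Θ, prodPMF N pri t = 1 := by
  unfold prodPMF
  rw [sum_fn_prod (fun _ a => pri a)]
  simp [h1]

lemma sum_prodQ (N m : ℕ) (Q : Θ → 𝒳 → ℝ) (t : Fin N → Θ) (h1 : ∀ s, ∑ x, Q s x = 1) :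
    ∑ x : Fin N → Fin m → 𝒳, prodQ N m Q t x = 1 := by
  unfold prodQ
  rw [sum_fn_prod (fun n (v : Fin m → 𝒳) => ∏ k, Q (t n) (v k))]
  have : ∀ n : Fin N, ∑ v : Fin m → 𝒳, ∏ k, Q (t n) (v k) = 1 := by
    intro n
    rw [sum_fn_prod (fun _ a => Q (t n) a)]
    simp [h1]
  rw [Finset.prod_congr rfl (fun n _ => this n)]
  simp

lemma card_supersets {D k m : ℕ} (W : Finset (Fin D)) (hW : W.card = m) (hmk : m ≤ k) :
    Fintype.card {S : KSets D k // W ⊆ S.1} = (D - m).choose (k - m) := by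
  classical
  rw [Fintype.card_subtype]
  have key : (Finset.univ.filter (fun S : KSets D k => W ⊆ S.1)).card
      = (Finset.powersetCard (k - m) Wᶜ).card := by
    apply Finset.card_bij (fun (S : KSets D k) (_ : S ∈ Finset.univ.filter (fun S : KSets D k => W ⊆ S.1)) => S.1 \ W)
    · intro S hS
      simp only [Finset.mem_filter, Finset.mem_univ, true_and] at hS
      rw [Finset.mem_powersetCard]
      refine ⟨fun a ha => Finset.mem_compl.2 (Finset.mem_sdiff.1 ha).2, ?_⟩
      rw [Finset.card_sdiff_of_subset hS, S.2, hW]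
    · intro S hS S' hS' h
      simp only [Finset.mem_filter, Finset.mem_univ, true_and] at hS hS'
      apply Subtype.ext
      have : S.1 \ W ∪ W = S'.1 \ W ∪ W := by rw [h]
      rwa [Finset.sdiff_union_of_subset hS, Finset.sdiff_union_of_subset hS'] at this
    · intro A hA
      rw [Finset.mem_powersetCard] at hA
      have hdisj : Disjoint A W := by
        rw [Finset.disjoint_left]
        intro a ha
        exact Finset.mem_compl.1 (hA.1 ha)
      have hcard : (A ∪ W).card = k := by
        rw [Finset.card_union_of_disjoint hdisj, hA.2, hW]
        omega
      refine ⟨⟨A ∪ W, hcard⟩, Finset.mem_filter.2 ⟨Finset.mem_univ _, Finset.subset_union_right⟩, ?_⟩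
      exact Finset.union_sdiff_cancel_right hdisj
  rw [key, Finset.card_powersetCard, Finset.card_compl, hW, Fintype.card_fin]

lemma card_ksets (D k : ℕ) : Fintype.card (KSets D k) = D.choose k := by
  classical
  have h := card_supersets (D := D) (k := k) (∅ : Finset (Fin D)) rfl (Nat.zero_le k)
  simp only [Finset.card_empty, Nat.sub_zero] at h
  rw [← h]
  exact (Fintype.card_congr (Equiv.subtypeUnivEquiv (fun S => Finset.empty_subset _))).symm

lemma double_count {D K j : ℕ} (f : KSets D K → ℝ) :
    ∑ W : KSets D j, ∑ S : KSets D K, (if W.1 ⊆ S.1 then f S else 0)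
      = (K.choose j : ℝ) * ∑ S : KSets D K, f S := by
  classical
  rw [Finset.sum_comm]
  rw [Finset.mul_sum]
  apply Finset.sum_congr rfl
  intro S _
  rw [← Finset.sum_filter]
  rw [Finset.sum_const]
  have hcard : (Finset.univ.filter (fun W : KSets D j => W.1 ⊆ S.1)).card = K.choose j := by
    have e : (Finset.univ.filter (fun W : KSets D j => W.1 ⊆ S.1)).card
        = (Finset.powersetCard j S.1).card := by
      apply Finset.card_bij (fun (W : KSets D j) (_ : W ∈ Finset.univ.filter (fun W : KSets D j => W.1 ⊆ S.1)) => W.1)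
      · intro W hW
        simp only [Finset.mem_filter, Finset.mem_univ, true_and] at hW
        rw [Finset.mem_powersetCard]
        exact ⟨hW, W.2⟩
      · intro W _ W' _ h
        exact Subtype.ext h
      · intro A hA
        rw [Finset.mem_powersetCard] at hA
        exact ⟨⟨A, hA.2⟩, by simp [hA.1], rfl⟩
    rw [e, Finset.card_powersetCard, S.2]
  rw [hcard]
  simp [mul_comm]



/-- The joint pmf of `(X^N_{T₁}, Y^N, X^N_{T₂}, θ^N)` under the law in which the salient
set equals `T`. -/
def joint2 (D K N i : ℕ) (pri : Θ → ℝ) (Q : Θ → 𝒳 → ℝ)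
    (P : (Fin N → Fin K → 𝒳) → (Fin N → 𝒴) → ℝ)
    (T T₁ : Finset (Fin D)) (hT : T.card = K) (hT1 : T₁.card = i)
    (hT2 : (T \ T₁).card = K - i)
    (u : Fin N → Fin i → 𝒳) (y : Fin N → 𝒴) (w : Fin N → Fin (K - i) → 𝒳)
    (t : Fin N → Θ) : ℝ :=
  prodPMF N pri t * prodQ N i Q t u * prodQ N (K - i) Q t w *
    P (assembleT T T₁ hT hT1 hT2 u w) y

/-- The conditional mutual information `I(X^N_{T₁}; Y^N | X^N_{T₂}, θ^N)` (base 2),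
under the joint law in which the salient set equals `T`. -/
def condMI2 (D K N i : ℕ) (pri : Θ → ℝ) (Q : Θ → 𝒳 → ℝ)
    (P : (Fin N → Fin K → 𝒳) → (Fin N → 𝒴) → ℝ)
    (T T₁ : Finset (Fin D)) (hT : T.card = K) (hT1 : T₁.card = i)
    (hT2 : (T \ T₁).card = K - i) : ℝ :=
  ∑ u : Fin N → Fin i → 𝒳, ∑ y : Fin N → 𝒴, ∑ w : Fin N → Fin (K - i) → 𝒳,
    ∑ t : Fin N → Θ,
      joint2 D K N i pri Q P T T₁ hT hT1 hT2 u y w t * Real.logb 2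
        ((joint2 D K N i pri Q P T T₁ hT hT1 hT2 u y w t *
            ∑ u' : Fin N → Fin i → 𝒳, ∑ y' : Fin N → 𝒴,
              joint2 D K N i pri Q P T T₁ hT hT1 hT2 u' y' w t) /
          ((∑ y' : Fin N → 𝒴, joint2 D K N i pri Q P T T₁ hT hT1 hT2 u y' w t) *
            (∑ u' : Fin N → Fin i → 𝒳, joint2 D K N i pri Q P T T₁ hT hT1 hT2 u' y w t)))

lemma prodPMF_nonneg {N : ℕ} (pri : Θ → ℝ) (h : ∀ t, 0 ≤ pri t) (t : Fin N → Θ) :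
    0 ≤ prodPMF N pri t := Finset.prod_nonneg (fun n _ => h (t n))

lemma prodQ_nonneg {N m : ℕ} (Q : Θ → 𝒳 → ℝ) (h : ∀ t x, 0 ≤ Q t x) (t : Fin N → Θ)
    (x : Fin N → Fin m → 𝒳) : 0 ≤ prodQ N m Q t x :=
  Finset.prod_nonneg (fun n _ => Finset.prod_nonneg (fun k _ => h (t n) (x n k)))

/-- The conditional law of `Y` given `θ` and the `T₂` columns. -/
def Rker (D K N i : ℕ) (Q : Θ → 𝒳 → ℝ) (P : (Fin N → Fin K → 𝒳) → (Fin N → 𝒴) → ℝ)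
    (T T₁ : Finset (Fin D)) (hT : T.card = K) (hT1 : T₁.card = i) (hT2 : (T \ T₁).card = K - i)
    (t : Fin N → Θ) (w : Fin N → Fin (K - i) → 𝒳) (y : Fin N → 𝒴) : ℝ :=
  ∑ u : Fin N → Fin i → 𝒳, prodQ N i Q t u * P (assembleT T T₁ hT hT1 hT2 u w) y

lemma Rker_nonneg (D K N i : ℕ) (Q : Θ → 𝒳 → ℝ) (P : (Fin N → Fin K → 𝒳) → (Fin N → 𝒴) → ℝ)
    (hQ0 : ∀ t x, 0 ≤ Q t x) (hP0 : ∀ x y, 0 ≤ P x y)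
    (T T₁ : Finset (Fin D)) (hT : T.card = K) (hT1 : T₁.card = i) (hT2 : (T \ T₁).card = K - i)
    (t : Fin N → Θ) (w : Fin N → Fin (K - i) → 𝒳) (y : Fin N → 𝒴) :
    0 ≤ Rker D K N i Q P T T₁ hT hT1 hT2 t w y :=
  Finset.sum_nonneg (fun u _ => mul_nonneg (prodQ_nonneg Q hQ0 t u) (hP0 _ y))

lemma sum_Rker (D K N i : ℕ) (Q : Θ → 𝒳 → ℝ) (P : (Fin N → Fin K → 𝒳) → (Fin N → 𝒴) → ℝ)
    (hQ1 : ∀ s, ∑ x, Q s x = 1) (hP1 : ∀ x, ∑ y, P x y = 1)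
    (T T₁ : Finset (Fin D)) (hT : T.card = K) (hT1 : T₁.card = i) (hT2 : (T \ T₁).card = K - i)
    (t : Fin N → Θ) (w : Fin N → Fin (K - i) → 𝒳) :
    ∑ y : Fin N → 𝒴, Rker D K N i Q P T T₁ hT hT1 hT2 t w y = 1 := by
  unfold Rker
  rw [Finset.sum_comm]
  have h : ∀ u : Fin N → Fin i → 𝒳,
      ∑ y : Fin N → 𝒴, prodQ N i Q t u * P (assembleT T T₁ hT hT1 hT2 u w) y
        = prodQ N i Q t u := by
    intro u
    rw [← Finset.mul_sum, hP1, mul_one]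
  rw [Finset.sum_congr rfl (fun u _ => h u), sum_prodQ N i Q t hQ1]

lemma condMI2_eq (D K N i : ℕ) (pri : Θ → ℝ) (hpri0 : ∀ t, 0 ≤ pri t)
    (Q : Θ → 𝒳 → ℝ) (hQ0 : ∀ t x, 0 ≤ Q t x) (hQ1 : ∀ s, ∑ x, Q s x = 1)
    (P : (Fin N → Fin K → 𝒳) → (Fin N → 𝒴) → ℝ)
    (hP0 : ∀ x y, 0 ≤ P x y) (hP1 : ∀ x, ∑ y, P x y = 1)
    (T T₁ : Finset (Fin D)) (hT : T.card = K) (hT1 : T₁.card = i) (hT2 : (T \ T₁).card = K - i) :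
    condMI2 D K N i pri Q P T T₁ hT hT1 hT2
      = ∑ u : Fin N → Fin i → 𝒳, ∑ y : Fin N → 𝒴, ∑ w : Fin N → Fin (K - i) → 𝒳,
          ∑ t : Fin N → Θ,
            joint2 D K N i pri Q P T T₁ hT hT1 hT2 u y w t *
              Real.logb 2 (P (assembleT T T₁ hT hT1 hT2 u w) y /
                Rker D K N i Q P T T₁ hT hT1 hT2 t w y) := by
  unfold condMI2
  refine Finset.sum_congr rfl (fun u _ => Finset.sum_congr rfl (fun y _ =>
    Finset.sum_congr rfl (fun w _ => Finset.sum_congr rfl (fun t _ => ?_))))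
  by_cases hJ : joint2 D K N i pri Q P T T₁ hT hT1 hT2 u y w t = 0
  · rw [hJ, zero_mul, zero_mul]
  -- positivity of factors
  have hfac : prodPMF N pri t ≠ 0 ∧ prodQ N i Q t u ≠ 0 ∧ prodQ N (K - i) Q t w ≠ 0 ∧
      P (assembleT T T₁ hT hT1 hT2 u w) y ≠ 0 := by
    unfold joint2 at hJ
    refine ⟨?_, ?_, ?_, ?_⟩ <;> intro h <;> apply hJ <;> rw [h] <;> ring
  have hπ : 0 < prodPMF N pri t := lt_of_le_of_ne (prodPMF_nonneg pri hpri0 t) (Ne.symm hfac.1)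
  have hQu : 0 < prodQ N i Q t u := lt_of_le_of_ne (prodQ_nonneg Q hQ0 t u) (Ne.symm hfac.2.1)
  have hQw : 0 < prodQ N (K - i) Q t w := lt_of_le_of_ne (prodQ_nonneg Q hQ0 t w) (Ne.symm hfac.2.2.1)
  have hPp : 0 < P (assembleT T T₁ hT hT1 hT2 u w) y :=
    lt_of_le_of_ne (hP0 _ y) (Ne.symm hfac.2.2.2)
  have hR : 0 < Rker D K N i Q P T T₁ hT hT1 hT2 t w y := by
    have hle : prodQ N i Q t u * P (assembleT T T₁ hT hT1 hT2 u w) y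
        ≤ Rker D K N i Q P T T₁ hT hT1 hT2 t w y :=
      Finset.single_le_sum (f := fun u' : Fin N → Fin i → 𝒳 =>
        prodQ N i Q t u' * P (assembleT T T₁ hT hT1 hT2 u' w) y)
        (fun u' _ => mul_nonneg (prodQ_nonneg Q hQ0 t u') (hP0 _ y)) (Finset.mem_univ u)
    calc (0:ℝ) < prodQ N i Q t u * P (assembleT T T₁ hT hT1 hT2 u w) y := by positivity
      _ ≤ _ := hle
  -- marginals
  have hm2 : (∑ y' : Fin N → 𝒴, joint2 D K N i pri Q P T T₁ hT hT1 hT2 u y' w t)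
      = prodPMF N pri t * prodQ N i Q t u * prodQ N (K - i) Q t w := by
    unfold joint2
    rw [← Finset.mul_sum, hP1, mul_one]
  have hm3 : (∑ u' : Fin N → Fin i → 𝒳, joint2 D K N i pri Q P T T₁ hT hT1 hT2 u' y w t)
      = prodPMF N pri t * prodQ N (K - i) Q t w * Rker D K N i Q P T T₁ hT hT1 hT2 t w y := by
    unfold joint2 Rker
    rw [Finset.mul_sum]
    exact Finset.sum_congr rfl (fun u' _ => by ring)
  have hm1 : (∑ u' : Fin N → Fin i → 𝒳, ∑ y' : Fin N → 𝒴,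
      joint2 D K N i pri Q P T T₁ hT hT1 hT2 u' y' w t)
      = prodPMF N pri t * prodQ N (K - i) Q t w := by
    have h1 : ∀ u' : Fin N → Fin i → 𝒳, (∑ y' : Fin N → 𝒴,
        joint2 D K N i pri Q P T T₁ hT hT1 hT2 u' y' w t)
        = prodPMF N pri t * prodQ N i Q t u' * prodQ N (K - i) Q t w := by
      intro u'
      unfold joint2
      rw [← Finset.mul_sum, hP1, mul_one]
    rw [Finset.sum_congr rfl (fun u' _ => h1 u')]
    have h2 : ∀ u' : Fin N → Fin i → 𝒳,
        prodPMF N pri t * prodQ N i Q t u' * prodQ N (K - i) Q t w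
        = (prodPMF N pri t * prodQ N (K - i) Q t w) * prodQ N i Q t u' := fun u' => by ring
    rw [Finset.sum_congr rfl (fun u' _ => h2 u'), ← Finset.mul_sum, sum_prodQ N i Q t hQ1, mul_one]
  rw [hm1, hm2, hm3]
  congr 1
  congr 1
  unfold joint2
  rw [div_eq_div_iff (by positivity) (by positivity)]
  ring

lemma sum4_reorder {α β γ δ : Type} [Fintype α] [Fintype β] [Fintype γ] [Fintype δ]
    (f : α → β → γ → δ → ℝ) :
    ∑ u : α, ∑ y : β, ∑ w : γ, ∑ t : δ, f u y w t
      = ∑ t : δ, ∑ u : α, ∑ w : γ, ∑ y : β, f u y w t := by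
  have step : ∀ (h : β → γ → δ → ℝ), (∑ y : β, ∑ w : γ, ∑ t : δ, h y w t)
      = ∑ t : δ, ∑ y : β, ∑ w : γ, h y w t := by
    intro h
    have a1 : ∀ y : β, (∑ w : γ, ∑ t : δ, h y w t) = ∑ t : δ, ∑ w : γ, h y w t :=
      fun y => Finset.sum_comm
    rw [Finset.sum_congr rfl (fun y (_ : y ∈ Finset.univ) => a1 y)]
    exact Finset.sum_comm
  calc ∑ u : α, ∑ y : β, ∑ w : γ, ∑ t : δ, f u y w t
      = ∑ u : α, ∑ t : δ, ∑ y : β, ∑ w : γ, f u y w t :=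
        Finset.sum_congr rfl (fun u _ => step (f u))
    _ = ∑ t : δ, ∑ u : α, ∑ y : β, ∑ w : γ, f u y w t := Finset.sum_comm
    _ = ∑ t : δ, ∑ u : α, ∑ w : γ, ∑ y : β, f u y w t :=
        Finset.sum_congr rfl (fun t _ => Finset.sum_congr rfl (fun u _ => Finset.sum_comm))

lemma KL_eq (D K N i : ℕ) (hiK : i ≤ K) (hKD : K ≤ D)
    (pri : Θ → ℝ) (hpri0 : ∀ t, 0 ≤ pri t)
    (Q : Θ → 𝒳 → ℝ) (hQ0 : ∀ t x, 0 ≤ Q t x) (hQ1 : ∀ s, ∑ x, Q s x = 1)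
    (P : (Fin N → Fin K → 𝒳) → (Fin N → 𝒴) → ℝ)
    (hP0 : ∀ x y, 0 ≤ P x y) (hP1 : ∀ x, ∑ y, P x y = 1)
    (hPsym : ∀ (e : Equiv.Perm (Fin K)) (x : Fin N → Fin K → 𝒳) (y : Fin N → 𝒴),
      P (fun n k => x n (e k)) y = P x y)
    (T T₁ : Finset (Fin D)) (hT : T.card = K) (hT1 : T₁.card = i) (hT2 : (T \ T₁).card = K - i)
    (S : KSets D K) (W : Finset (Fin D)) (hW : W.card = K - i) (hWS : W ⊆ S.1) :
    ∑ t : Fin N → Θ, ∑ x : Fin N → Fin D → 𝒳, ∑ y : Fin N → 𝒴,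
      (prodPMF N pri t * prodQ N D Q t x * P (cols S x) y) *
        Real.logb 2 ((prodPMF N pri t * prodQ N D Q t x * P (cols S x) y) /
          (prodPMF N pri t * prodQ N D Q t x *
            Rker D K N i Q P T T₁ hT hT1 hT2 t (colsOf W hW x) y))
      = condMI2 D K N i pri Q P T T₁ hT hT1 hT2 := by
  classical
  rw [condMI2_eq D K N i pri hpri0 Q hQ0 hQ1 P hP0 hP1 T T₁ hT hT1 hT2,
    sum4_reorder]
  refine Finset.sum_congr rfl (fun t _ => ?_)
  -- set up the partition
  set A : Finset (Fin D) := S.1 \ W with hAdef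
  have hA : A.card = i := by
    rw [hAdef, Finset.card_sdiff_of_subset hWS, S.2, hW]
    omega
  have hC : ((S.1)ᶜ : Finset (Fin D)).card = D - K := by
    rw [Finset.card_compl, S.2, Fintype.card_fin]
  have hcov : ∀ d : Fin D, d ∈ A ∨ d ∈ W ∨ d ∈ (S.1)ᶜ := by
    intro d
    by_cases hw : d ∈ W
    · exact Or.inr (Or.inl hw)
    by_cases hs : d ∈ S.1
    · exact Or.inl (by rw [hAdef]; exact Finset.mem_sdiff.2 ⟨hs, hw⟩)
    · exact Or.inr (Or.inr (Finset.mem_compl.2 hs))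
  have hAB : Disjoint A W := Finset.sdiff_disjoint
  have hAC : Disjoint A ((S.1)ᶜ) := by
    rw [Finset.disjoint_left]
    intro d hd hc
    exact (Finset.mem_compl.1 hc) (Finset.mem_sdiff.1 hd).1
  have hBC : Disjoint W ((S.1)ᶜ) := by
    rw [Finset.disjoint_left]
    intro d hd hc
    exact (Finset.mem_compl.1 hc) (hWS hd)
  have hunion : A ∪ W ∪ (S.1)ᶜ = Finset.univ := by
    ext d
    simp only [Finset.mem_union, Finset.mem_univ, iff_true]
    rcases hcov d with h | h | h
    · exact Or.inl (Or.inl h)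
    · exact Or.inl (Or.inr h)
    · exact Or.inr h
  rw [sum_buildX A W ((S.1)ᶜ) hA hW hC hcov hAB hAC hBC]
  refine Finset.sum_congr rfl (fun u _ => Finset.sum_congr rfl (fun w _ => ?_))
  -- now fixed t u w : sum over r and y
  have key : ∀ (r : Fin N → Fin (D - K) → 𝒳) (y : Fin N → 𝒴),
      (prodPMF N pri t * prodQ N D Q t (buildX A W ((S.1)ᶜ) hA hW hC hcov u w r)
          * P (cols S (buildX A W ((S.1)ᶜ) hA hW hC hcov u w r)) y) *
        Real.logb 2 ((prodPMF N pri t * prodQ N D Q t (buildX A W ((S.1)ᶜ) hA hW hC hcov u w r)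
            * P (cols S (buildX A W ((S.1)ᶜ) hA hW hC hcov u w r)) y) /
          (prodPMF N pri t * prodQ N D Q t (buildX A W ((S.1)ᶜ) hA hW hC hcov u w r) *
            Rker D K N i Q P T T₁ hT hT1 hT2 t
              (colsOf W hW (buildX A W ((S.1)ᶜ) hA hW hC hcov u w r)) y))
      = prodQ N (D - K) Q t r *
          (joint2 D K N i pri Q P T T₁ hT hT1 hT2 u y w t *
            Real.logb 2 (P (assembleT T T₁ hT hT1 hT2 u w) y /
              Rker D K N i Q P T T₁ hT hT1 hT2 t w y)) := by
    intro r y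
    have hprod : prodQ N D Q t (buildX A W ((S.1)ᶜ) hA hW hC hcov u w r)
        = prodQ N i Q t u * prodQ N (K - i) Q t w * prodQ N (D - K) Q t r :=
      prodQ_buildX A W ((S.1)ᶜ) hA hW hC hcov hAB hAC hBC Q t u w r hunion
    have hcolsW : colsOf W hW (buildX A W ((S.1)ᶜ) hA hW hC hcov u w r) = w :=
      colsOf_buildX_B A W ((S.1)ᶜ) hA hW hC hcov hAB u w r
    have hcolsA : colsOf A hA (buildX A W ((S.1)ᶜ) hA hW hC hcov u w r) = u :=
      colsOf_buildX_A A W ((S.1)ᶜ) hA hW hC hcov u w r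
    have hPeq : P (cols S (buildX A W ((S.1)ᶜ) hA hW hC hcov u w r)) y
        = P (assembleT T T₁ hT hT1 hT2 u w) y := by
      have h := P_assemble_eq P hPsym T T₁ hT hT1 hT2 S W hW hWS hA
        (buildX A W ((S.1)ᶜ) hA hW hC hcov u w r) y
      rw [hcolsA, hcolsW] at h
      exact h.symm
    rw [hprod, hcolsW, hPeq]
    unfold joint2
    set π := prodPMF N pri t
    set Qu := prodQ N i Q t u
    set Qw := prodQ N (K - i) Q t w
    set Qr := prodQ N (D - K) Q t r
    set Pp := P (assembleT T T₁ hT hT1 hT2 u w) y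
    set R := Rker D K N i Q P T T₁ hT hT1 hT2 t w y
    by_cases h0 : π * Qu * Qw * Qr * Pp = 0
    · have hL0 : π * (Qu * Qw * Qr) * Pp = 0 := by rw [← h0]; ring
      have hR0 : Qr * (π * Qu * Qw * Pp) = 0 := by rw [← h0]; ring
      rw [hL0, zero_mul, show Qr * (π * Qu * Qw * Pp *
        Real.logb 2 (Pp / R)) = (Qr * (π * Qu * Qw * Pp)) * Real.logb 2 (Pp / R) from by ring,
        hR0, zero_mul]
    · have hπ : 0 < π := lt_of_le_of_ne (prodPMF_nonneg pri hpri0 t) (by intro h; exact h0 (by rw [← h]; ring))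
      have hQu : 0 < Qu := lt_of_le_of_ne (prodQ_nonneg Q hQ0 t u) (by intro h; exact h0 (by rw [← h]; ring))
      have hQw : 0 < Qw := lt_of_le_of_ne (prodQ_nonneg Q hQ0 t w) (by intro h; exact h0 (by rw [← h]; ring))
      have hQr : 0 < Qr := lt_of_le_of_ne (prodQ_nonneg Q hQ0 t r) (by intro h; exact h0 (by rw [← h]; ring))
      have hPp : 0 < Pp := lt_of_le_of_ne (hP0 _ y) (by intro h; exact h0 (by rw [← h]; ring))
      have hR : 0 < R := by
        have hle : Qu * Pp ≤ R :=
          Finset.single_le_sum (f := fun u' : Fin N → Fin i → 𝒳 =>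
            prodQ N i Q t u' * P (assembleT T T₁ hT hT1 hT2 u' w) y)
            (fun u' _ => mul_nonneg (prodQ_nonneg Q hQ0 t u') (hP0 _ y)) (Finset.mem_univ u)
        calc (0:ℝ) < Qu * Pp := by positivity
          _ ≤ R := hle
      have harg : (π * (Qu * Qw * Qr) * Pp) / (π * (Qu * Qw * Qr) * R) = Pp / R := by
        rw [div_eq_div_iff (by positivity) (by positivity)]
        ring
      rw [harg]
      ring
  rw [Finset.sum_congr rfl (fun r _ => Finset.sum_congr rfl (fun y _ => key r y))]
  have h2 : ∀ r : Fin N → Fin (D - K) → 𝒳,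
      ∑ y : Fin N → 𝒴, prodQ N (D - K) Q t r *
          (joint2 D K N i pri Q P T T₁ hT hT1 hT2 u y w t *
            Real.logb 2 (P (assembleT T T₁ hT hT1 hT2 u w) y /
              Rker D K N i Q P T T₁ hT hT1 hT2 t w y))
      = prodQ N (D - K) Q t r *
          ∑ y : Fin N → 𝒴, (joint2 D K N i pri Q P T T₁ hT hT1 hT2 u y w t *
            Real.logb 2 (P (assembleT T T₁ hT hT1 hT2 u w) y /
              Rker D K N i Q P T T₁ hT hT1 hT2 t w y)) := by
    intro r
    rw [Finset.mul_sum]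
  rw [Finset.sum_congr rfl (fun r _ => h2 r), ← Finset.sum_mul, sum_prodQ N (D - K) Q t hQ1,
    one_mul]

lemma two_le_choose {n j : ℕ} (h1 : 1 ≤ j) (h2 : j < n) : 2 ≤ n.choose j := by
  obtain ⟨m, rfl⟩ : ∃ m, n = m + 1 := ⟨n - 1, by omega⟩
  obtain ⟨l, rfl⟩ : ∃ l, j = l + 1 := ⟨j - 1, by omega⟩
  rw [Nat.choose_succ_succ]
  have c1 : 0 < m.choose l := Nat.choose_pos (by omega)
  have c2 : 0 < m.choose l.succ := Nat.choose_pos (by omega)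
  omega

lemma prodQ_cols_pos {D N m : ℕ} (Q : Θ → 𝒳 → ℝ) (hQ0 : ∀ t x, 0 ≤ Q t x)
    (t : Fin N → Θ) (x : Fin N → Fin D → 𝒳) (hx : prodQ N D Q t x ≠ 0)
    (A : Finset (Fin D)) (hA : A.card = m) :
    0 < prodQ N m Q t (colsOf A hA x) := by
  have hfac : ∀ n : Fin N, ∀ d : Fin D, Q (t n) (x n d) ≠ 0 := by
    intro n d
    unfold prodQ at hx
    have h1 := Finset.prod_ne_zero_iff.1 hx n (Finset.mem_univ n)
    exact Finset.prod_ne_zero_iff.1 h1 d (Finset.mem_univ d)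
  apply Finset.prod_pos
  intro n _
  apply Finset.prod_pos
  intro k _
  exact lt_of_le_of_ne (hQ0 _ _) (Ne.symm (hfac n (A.orderEmbOfFin hA k)))

lemma sum_pmf3 {D N : ℕ} (pri : Θ → ℝ) (hpri1 : ∑ t, pri t = 1)
    (Q : Θ → 𝒳 → ℝ) (hQ1 : ∀ s, ∑ x, Q s x = 1)
    (κ : (Fin N → Θ) → (Fin N → Fin D → 𝒳) → (Fin N → 𝒴) → ℝ)
    (hκ : ∀ t x, ∑ y, κ t x y = 1) :
    ∑ z : (Fin N → Θ) × (Fin N → Fin D → 𝒳) × (Fin N → 𝒴),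
      prodPMF N pri z.1 * prodQ N D Q z.1 z.2.1 * κ z.1 z.2.1 z.2.2 = 1 := by
  rw [Fintype.sum_prod_type]
  have ht : ∀ t : Fin N → Θ,
      (∑ xy : (Fin N → Fin D → 𝒳) × (Fin N → 𝒴),
        prodPMF N pri t * prodQ N D Q t xy.1 * κ t xy.1 xy.2) = prodPMF N pri t := by
    intro t
    rw [Fintype.sum_prod_type]
    have hx : ∀ x : Fin N → Fin D → 𝒳,
        (∑ y : Fin N → 𝒴, prodPMF N pri t * prodQ N D Q t x * κ t x y)
          = prodPMF N pri t * prodQ N D Q t x := by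
      intro x
      rw [← Finset.mul_sum, hκ, mul_one]
    rw [Finset.sum_congr rfl (fun x _ => hx x), ← Finset.mul_sum, sum_prodQ N D Q t hQ1, mul_one]
  rw [Finset.sum_congr rfl (fun t _ => ht t)]
  exact sum_prodPMF N pri hpri1

lemma err_expand {D K N : ℕ} (pri : Θ → ℝ) (Q : Θ → 𝒳 → ℝ)
    (P : (Fin N → Fin K → 𝒳) → (Fin N → 𝒴) → ℝ)
    (g : (Fin N → Fin D → 𝒳) → (Fin N → 𝒴) → Finset (Fin D)) (S : KSets D K) :
    (∑ t : Fin N → Θ, prodPMF N pri t * ∑ x : Fin N → Fin D → 𝒳, prodQ N D Q t x *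
        ∑ y : Fin N → 𝒴, P (cols S x) y * (if g x y ≠ S.1 then (1:ℝ) else 0))
      = ∑ z : (Fin N → Θ) × (Fin N → Fin D → 𝒳) × (Fin N → 𝒴),
          (prodPMF N pri z.1 * prodQ N D Q z.1 z.2.1 * P (cols S z.2.1) z.2.2) *
            (if g z.2.1 z.2.2 ≠ S.1 then (1:ℝ) else 0) := by
  rw [Fintype.sum_prod_type]
  refine Finset.sum_congr rfl (fun t _ => ?_)
  rw [Fintype.sum_prod_type, Finset.mul_sum]
  refine Finset.sum_congr rfl (fun x _ => ?_)
  rw [Finset.mul_sum, Finset.mul_sum]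
  refine Finset.sum_congr rfl (fun y _ => ?_)
  ring

theorem statement2
    (D K N i : ℕ) (hK : 1 ≤ K) (hDK : K < D) (hN : 1 ≤ N) (hi1 : 1 ≤ i) (hiK : i ≤ K)
    (hD2 : 2 ≤ D - K + i)
    (pri : Θ → ℝ) (hpri0 : ∀ t, 0 ≤ pri t) (hpri1 : ∑ t, pri t = 1)
    (Q : Θ → 𝒳 → ℝ) (hQ0 : ∀ t x, 0 ≤ Q t x) (hQ1 : ∀ t, ∑ x, Q t x = 1)
    (P : (Fin N → Fin K → 𝒳) → (Fin N → 𝒴) → ℝ)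
    (hP0 : ∀ x y, 0 ≤ P x y) (hP1 : ∀ x, ∑ y, P x y = 1)
    (hPsym : ∀ (e : Equiv.Perm (Fin K)) (x : Fin N → Fin K → 𝒳) (y : Fin N → 𝒴),
      P (fun n k => x n (e k)) y = P x y)
    (T T₁ : Finset (Fin D)) (hT : T.card = K) (hsub : T₁ ⊆ T) (hT1 : T₁.card = i)
    (hT2 : (T \ T₁).card = K - i)
    (g : (Fin N → Fin D → 𝒳) → (Fin N → 𝒴) → Finset (Fin D)) :
    1 - (condMI2 D K N i pri Q P T T₁ hT hT1 hT2 + 1) /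
        Real.logb 2 (((D - K + i).choose i : ℕ)) ≤
      (D.choose K : ℝ)⁻¹ * ∑ S : KSets D K, ∑ t : Fin N → Θ, prodPMF N pri t *
        ∑ x : Fin N → Fin D → 𝒳, prodQ N D Q t x *
          ∑ y : Fin N → 𝒴, P (cols S x) y * (if g x y ≠ S.1 then (1:ℝ) else 0) := by
  classical
  have hKD : K ≤ D := le_of_lt hDK
  have hM2 : 2 ≤ (D - K + i).choose i := two_le_choose hi1 (by omega)
  set Mr : ℝ := (((D - K + i).choose i : ℕ) : ℝ) with hMr
  set L : ℝ := Real.logb 2 Mr with hLdef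
  set I : ℝ := condMI2 D K N i pri Q P T T₁ hT hT1 hT2 with hIdef
  set err : KSets D K → ℝ := fun S => ∑ t : Fin N → Θ, prodPMF N pri t *
        ∑ x : Fin N → Fin D → 𝒳, prodQ N D Q t x *
          ∑ y : Fin N → 𝒴, P (cols S x) y * (if g x y ≠ S.1 then (1:ℝ) else 0) with herrdef
  have key : ∀ W : KSets D (K - i),
      (1 - (I + 1) / L) * Mr ≤ ∑ S : KSets D K, (if W.1 ⊆ S.1 then err S else 0) := by
    intro W
    have hcardF : Fintype.card {S' : KSets D K // W.1 ⊆ S'.1} = (D - K + i).choose i := by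
      rw [card_supersets W.1 W.2 (by omega)]
      congr 1 <;> omega
    have hMF : 2 ≤ Fintype.card {S' : KSets D K // W.1 ⊆ S'.1} := by rw [hcardF]; exact hM2
    have hp0 : ∀ (s : {S' : KSets D K // W.1 ⊆ S'.1})
        (z : (Fin N → Θ) × (Fin N → Fin D → 𝒳) × (Fin N → 𝒴)),
        0 ≤ prodPMF N pri z.1 * prodQ N D Q z.1 z.2.1 * P (cols s.1 z.2.1) z.2.2 :=
      fun s z => mul_nonneg (mul_nonneg (prodPMF_nonneg pri hpri0 z.1)
        (prodQ_nonneg Q hQ0 z.1 z.2.1)) (hP0 _ _)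
    have hp1 : ∀ s : {S' : KSets D K // W.1 ⊆ S'.1},
        (∑ z : (Fin N → Θ) × (Fin N → Fin D → 𝒳) × (Fin N → 𝒴),
          prodPMF N pri z.1 * prodQ N D Q z.1 z.2.1 * P (cols s.1 z.2.1) z.2.2) = 1 :=
      fun s => sum_pmf3 pri hpri1 Q hQ1 (fun t x y => P (cols s.1 x) y) (fun t x => hP1 _)
    have hq0 : ∀ z : (Fin N → Θ) × (Fin N → Fin D → 𝒳) × (Fin N → 𝒴),
        0 ≤ prodPMF N pri z.1 * prodQ N D Q z.1 z.2.1 *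
          Rker D K N i Q P T T₁ hT hT1 hT2 z.1 (colsOf W.1 W.2 z.2.1) z.2.2 :=
      fun z => mul_nonneg (mul_nonneg (prodPMF_nonneg pri hpri0 z.1)
        (prodQ_nonneg Q hQ0 z.1 z.2.1))
        (Rker_nonneg D K N i Q P hQ0 hP0 T T₁ hT hT1 hT2 _ _ _)
    have hq1 : (∑ z : (Fin N → Θ) × (Fin N → Fin D → 𝒳) × (Fin N → 𝒴),
        prodPMF N pri z.1 * prodQ N D Q z.1 z.2.1 *
          Rker D K N i Q P T T₁ hT hT1 hT2 z.1 (colsOf W.1 W.2 z.2.1) z.2.2) ≤ 1 :=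
      le_of_eq (sum_pmf3 pri hpri1 Q hQ1
        (fun t x y => Rker D K N i Q P T T₁ hT hT1 hT2 t (colsOf W.1 W.2 x) y)
        (fun t x => sum_Rker D K N i Q P hQ1 hP1 T T₁ hT hT1 hT2 t (colsOf W.1 W.2 x)))
    have hdom : ∀ (s : {S' : KSets D K // W.1 ⊆ S'.1})
        (z : (Fin N → Θ) × (Fin N → Fin D → 𝒳) × (Fin N → 𝒴)),
        prodPMF N pri z.1 * prodQ N D Q z.1 z.2.1 *
          Rker D K N i Q P T T₁ hT hT1 hT2 z.1 (colsOf W.1 W.2 z.2.1) z.2.2 = 0 →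
        prodPMF N pri z.1 * prodQ N D Q z.1 z.2.1 * P (cols s.1 z.2.1) z.2.2 = 0 := by
      intro s z hq
      by_contra hp
      have hπ : prodPMF N pri z.1 ≠ 0 := fun h => hp (by rw [h]; ring)
      have hQx : prodQ N D Q z.1 z.2.1 ≠ 0 := fun h => hp (by rw [h]; ring)
      have hPc : P (cols s.1 z.2.1) z.2.2 ≠ 0 := fun h => hp (by rw [h]; ring)
      have hA : (s.1.1 \ W.1).card = i := by
        rw [Finset.card_sdiff_of_subset s.2, s.1.2, W.2]; omega
      have hu0 : 0 < prodQ N i Q z.1 (colsOf (s.1.1 \ W.1) hA z.2.1) :=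
        prodQ_cols_pos Q hQ0 z.1 z.2.1 hQx (s.1.1 \ W.1) hA
      have hPeq := P_assemble_eq P hPsym T T₁ hT hT1 hT2 s.1 W.1 W.2 s.2 hA z.2.1 z.2.2
      have hterm : 0 < prodQ N i Q z.1 (colsOf (s.1.1 \ W.1) hA z.2.1) *
          P (assembleT T T₁ hT hT1 hT2 (colsOf (s.1.1 \ W.1) hA z.2.1)
            (colsOf W.1 W.2 z.2.1)) z.2.2 := by
        rw [hPeq]
        exact mul_pos hu0 (lt_of_le_of_ne (hP0 _ _) (Ne.symm hPc))
      have hRpos : 0 < Rker D K N i Q P T T₁ hT hT1 hT2 z.1 (colsOf W.1 W.2 z.2.1) z.2.2 := by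
        refine lt_of_lt_of_le hterm ?_
        exact Finset.single_le_sum (f := fun u' : Fin N → Fin i → 𝒳 =>
          prodQ N i Q z.1 u' * P (assembleT T T₁ hT hT1 hT2 u' (colsOf W.1 W.2 z.2.1)) z.2.2)
          (fun u' _ => mul_nonneg (prodQ_nonneg Q hQ0 z.1 u') (hP0 _ _)) (Finset.mem_univ _)
      have hπp : 0 < prodPMF N pri z.1 := lt_of_le_of_ne (prodPMF_nonneg pri hpri0 z.1) (Ne.symm hπ)
      have hQxp : 0 < prodQ N D Q z.1 z.2.1 := lt_of_le_of_ne (prodQ_nonneg Q hQ0 z.1 z.2.1) (Ne.symm hQx)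
      exact absurd hq (ne_of_gt (by positivity))
    have hKL : ∀ s : {S' : KSets D K // W.1 ⊆ S'.1},
        (∑ z : (Fin N → Θ) × (Fin N → Fin D → 𝒳) × (Fin N → 𝒴),
          (prodPMF N pri z.1 * prodQ N D Q z.1 z.2.1 * P (cols s.1 z.2.1) z.2.2) *
            Real.logb 2 ((prodPMF N pri z.1 * prodQ N D Q z.1 z.2.1 * P (cols s.1 z.2.1) z.2.2) /
              (prodPMF N pri z.1 * prodQ N D Q z.1 z.2.1 *
                Rker D K N i Q P T T₁ hT hT1 hT2 z.1 (colsOf W.1 W.2 z.2.1) z.2.2))) ≤ I := by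
      intro s
      refine le_of_eq ?_
      rw [hIdef]
      rw [Fintype.sum_prod_type]
      refine Eq.trans (Finset.sum_congr rfl (fun t _ => Fintype.sum_prod_type _)) ?_
      exact KL_eq D K N i hiK hKD pri hpri0 Q hQ0 hQ1 P hP0 hP1 hPsym T T₁ hT hT1 hT2
        s.1 W.1 W.2 s.2
    have main := fano_core
      (fun (s : {S' : KSets D K // W.1 ⊆ S'.1})
          (z : (Fin N → Θ) × (Fin N → Fin D → 𝒳) × (Fin N → 𝒴)) =>
        prodPMF N pri z.1 * prodQ N D Q z.1 z.2.1 * P (cols s.1 z.2.1) z.2.2)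
      (fun z => prodPMF N pri z.1 * prodQ N D Q z.1 z.2.1 *
        Rker D K N i Q P T T₁ hT hT1 hT2 z.1 (colsOf W.1 W.2 z.2.1) z.2.2)
      I hp0 hp1 hq0 hq1 hdom hKL
      (fun z => if h : (g z.2.1 z.2.2).card = K ∧ W.1 ⊆ (g z.2.1 z.2.2)
        then some ⟨⟨g z.2.1 z.2.2, h.1⟩, h.2⟩ else none)
      hMF
    rw [hcardF] at main
    have hrhs : (∑ s : {S' : KSets D K // W.1 ⊆ S'.1},
        ∑ z : (Fin N → Θ) × (Fin N → Fin D → 𝒳) × (Fin N → 𝒴),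
          (prodPMF N pri z.1 * prodQ N D Q z.1 z.2.1 * P (cols s.1 z.2.1) z.2.2) *
            (if (if h : (g z.2.1 z.2.2).card = K ∧ W.1 ⊆ (g z.2.1 z.2.2)
              then some (⟨⟨g z.2.1 z.2.2, h.1⟩, h.2⟩ : {S' : KSets D K // W.1 ⊆ S'.1})
              else none) ≠ some s then (1:ℝ) else 0))
        = ∑ S : KSets D K, (if W.1 ⊆ S.1 then err S else 0) := by
      have step1 : ∀ s : {S' : KSets D K // W.1 ⊆ S'.1},
          (∑ z : (Fin N → Θ) × (Fin N → Fin D → 𝒳) × (Fin N → 𝒴),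
            (prodPMF N pri z.1 * prodQ N D Q z.1 z.2.1 * P (cols s.1 z.2.1) z.2.2) *
              (if (if h : (g z.2.1 z.2.2).card = K ∧ W.1 ⊆ (g z.2.1 z.2.2)
                then some (⟨⟨g z.2.1 z.2.2, h.1⟩, h.2⟩ : {S' : KSets D K // W.1 ⊆ S'.1})
                else none) ≠ some s then (1:ℝ) else 0))
          = err s.1 := by
        intro s
        have hind : ∀ z : (Fin N → Θ) × (Fin N → Fin D → 𝒳) × (Fin N → 𝒴),
            (if (if h : (g z.2.1 z.2.2).card = K ∧ W.1 ⊆ (g z.2.1 z.2.2)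
              then some (⟨⟨g z.2.1 z.2.2, h.1⟩, h.2⟩ : {S' : KSets D K // W.1 ⊆ S'.1})
              else none) ≠ some s then (1:ℝ) else 0)
            = (if g z.2.1 z.2.2 ≠ s.1.1 then (1:ℝ) else 0) := by
          intro z
          have hiff : ((if h : (g z.2.1 z.2.2).card = K ∧ W.1 ⊆ (g z.2.1 z.2.2)
              then some (⟨⟨g z.2.1 z.2.2, h.1⟩, h.2⟩ : {S' : KSets D K // W.1 ⊆ S'.1})
              else none) = some s) ↔ g z.2.1 z.2.2 = s.1.1 := by
            constructor
            · intro h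
              by_cases hcond : (g z.2.1 z.2.2).card = K ∧ W.1 ⊆ (g z.2.1 z.2.2)
              · rw [dif_pos hcond] at h
                have h2 := Option.some.inj h
                rw [← h2]
              · rw [dif_neg hcond] at h
                exact absurd h (by simp)
            · intro h
              have hcond : (g z.2.1 z.2.2).card = K ∧ W.1 ⊆ (g z.2.1 z.2.2) := by
                rw [h]; exact ⟨s.1.2, s.2⟩
              rw [dif_pos hcond]
              exact congrArg some (Subtype.ext (Subtype.ext h))
          by_cases hc : g z.2.1 z.2.2 = s.1.1
          · rw [if_neg (not_not.mpr (hiff.2 hc)), if_neg (by simpa using hc)]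
          · rw [if_pos (fun h => hc (hiff.1 h)), if_pos hc]
        rw [Finset.sum_congr rfl (fun z _ => by rw [hind z])]
        rw [herrdef]
        exact (err_expand pri Q P g s.1).symm
      rw [Finset.sum_congr rfl (fun s _ => step1 s)]
      have step3 : (∑ s : {S' : KSets D K // W.1 ⊆ S'.1}, err s.1)
          = ∑ S ∈ Finset.univ.filter (fun S : KSets D K => W.1 ⊆ S.1), err S :=
        (Finset.sum_subtype _ (by simp) err).symm
      rw [step3, Finset.sum_filter]
    rw [hrhs] at main
    exact main
  have sumkey := Finset.sum_le_sum (fun (W : KSets D (K - i)) (_ : W ∈ Finset.univ) => key W)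
  rw [double_count err, Finset.sum_const, Finset.card_univ, card_ksets, nsmul_eq_mul] at sumkey
  have hnat : D.choose K * K.choose (K - i) = D.choose (K - i) * (D - K + i).choose i := by
    rw [Nat.choose_mul (Nat.sub_le K i)]
    have e1 : D - (K - i) = D - K + i := by omega
    have e2 : K - (K - i) = i := by omega
    rw [e1, e2]
  have hchoose : (D.choose (K - i) : ℝ) * Mr = (D.choose K : ℝ) * (K.choose (K - i) : ℝ) := by
    rw [hMr]
    push_cast
    exact_mod_cast congrArg (fun n : ℕ => (n : ℝ)) hnat.symm
  have hKc : (0:ℝ) < (K.choose (K - i) : ℝ) := by exact_mod_cast Nat.choose_pos (Nat.sub_le K i)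
  have hDc : (0:ℝ) < (D.choose K : ℝ) := by exact_mod_cast Nat.choose_pos hKD
  have final : (1 - (I + 1) / L) * (D.choose K : ℝ) ≤ ∑ S : KSets D K, err S := by
    have h1 : (1 - (I + 1) / L) * (D.choose K : ℝ) * (K.choose (K - i) : ℝ)
        ≤ (∑ S : KSets D K, err S) * (K.choose (K - i) : ℝ) := by
      calc (1 - (I + 1) / L) * (D.choose K : ℝ) * (K.choose (K - i) : ℝ)
          = (D.choose (K - i) : ℝ) * ((1 - (I + 1) / L) * Mr) := by
            linear_combination (-(1 - (I + 1) / L)) * hchoose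
        _ ≤ (K.choose (K - i) : ℝ) * ∑ S : KSets D K, err S := sumkey
        _ = (∑ S : KSets D K, err S) * (K.choose (K - i) : ℝ) := mul_comm _ _
    exact le_of_mul_le_mul_right h1 hKc
  rw [inv_mul_eq_div, le_div_iff₀ hDc]
  exact final
end
end

section
/- Fix ρ ∈ [0,1) and σ > 0. There exist constants c > 0 and C > 0 such that the following holds: for any sequences of positive integers K(D), N(D) and positive reals SNR(D) indexed by D with 1 ≤ K(D) ≤ D/2, SNR(D) ≥ c·log D, and N(D) ≥ C·K(D)·log(D/K(D)) / log(1 + (1−ρ)σ²), one has Σ_{i=1}^{K(D)} 2^{−N(D)·f_i(D)} → 0 as D → ∞, where f_i(D) = ½·log₂( 1 + (1−ρ)·2iσ²·SNR(D)/N(D) ) − (i/(4N(D)))·log₂ 4 − (1/N(D))·log₂( C(D−K(D), i)·C(K(D), i) ). -/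
theorem myExpBound (n : ℕ) (hn : 0 < n) : (1 + 1/(n:ℝ))^n ≤ Real.exp 1 := by
  have h1 : (1 + 1/(n:ℝ))^n ≤ (Real.exp (1/n))^n := by
    apply pow_le_pow_left₀ (by positivity)
    linarith [Real.add_one_le_exp (1/(n:ℝ))]
  have h2 : (Real.exp (1/(n:ℝ)))^n = Real.exp ((n:ℝ) * (1/n)) := (Real.exp_nat_mul _ n).symm
  have h3 : (n:ℝ) * (1/n) = 1 := by field_simp
  rw [h2, h3] at h1; exact h1

theorem myPowSelfLe (n : ℕ) : (n:ℝ)^n ≤ (n.factorial : ℝ) * Real.exp n := by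
  induction n with
  | zero => simp
  | succ n ih =>
    rcases Nat.eq_zero_or_pos n with rfl | hn
    · simpa using Real.one_le_exp (by norm_num)
    have h1 : ((n:ℝ)+1)^n ≤ (n:ℝ)^n * Real.exp 1 := by
      have h2 : ((n:ℝ)+1)^n = (n:ℝ)^n * (1+1/n)^n := by
        rw [← mul_pow]; congr 1; field_simp
      rw [h2]
      exact mul_le_mul_of_nonneg_left (myExpBound n hn) (by positivity)
    calc ((n+1:ℕ):ℝ)^(n+1) = ((n:ℝ)+1) * ((n:ℝ)+1)^n := by push_cast; ring
      _ ≤ ((n:ℝ)+1) * ((n:ℝ)^n * Real.exp 1) := by gcongr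
      _ ≤ ((n:ℝ)+1) * (((n.factorial : ℝ) * Real.exp n) * Real.exp 1) := by gcongr <;> positivity
      _ = ((n+1:ℕ).factorial : ℝ) * Real.exp (((n+1:ℕ)):ℝ) := by
          rw [Nat.factorial_succ]
          push_cast [Real.exp_add]
          ring

theorem myChooseMono {D i j : ℕ} (hij : i ≤ j) (hj : 2*j ≤ D) : D.choose i ≤ D.choose j := by
  induction j with
  | zero => simp_all
  | succ j ih =>
    rcases Nat.eq_or_lt_of_le hij with rfl | h
    · exact le_refl _
    have h1 : i ≤ j := by omega
    exact (ih h1 (by omega)).trans (Nat.choose_le_succ_of_lt_half_left (by omega))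

theorem myChooseLeTwoPow (K i : ℕ) : K.choose i ≤ 2^K := by
  rcases le_or_gt i K with h | h
  · calc K.choose i ≤ ∑ j ∈ Finset.range (K+1), K.choose j :=
        Finset.single_le_sum (fun j _ => Nat.zero_le _) (Finset.mem_range.2 (by omega))
    _ = 2^K := Nat.sum_range_choose K
  · simp [Nat.choose_eq_zero_of_lt h]


open Real

theorem myLogbTwoNatLe (K : ℕ) : Real.logb 2 (K:ℝ) ≤ (K:ℝ) := by
  rcases Nat.eq_zero_or_pos K with rfl | hK
  · simp
  have h1 : (K:ℝ) ≤ (2:ℝ)^(K:ℕ) := by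
    exact_mod_cast (Nat.lt_two_pow_self (n := K)).le
  calc Real.logb 2 (K:ℝ) ≤ Real.logb 2 ((2:ℝ)^(K:ℕ)) :=
        Real.logb_le_logb_of_le one_lt_two (by exact_mod_cast hK) h1
    _ = (K:ℝ) := by rw [Real.logb_pow, Real.logb_self_eq_one one_lt_two]; ring

theorem myLogbE : Real.logb 2 (Real.exp 1) ≤ 3/2 := by
  rw [Real.logb, Real.log_exp]
  rw [div_le_iff₀ (Real.log_pos one_lt_two)]
  nlinarith [Real.log_two_gt_d9]

theorem myRpowLe (x : ℝ) (hx0 : 0 ≤ x) (hx1 : x ≤ 1) : (2:ℝ)^x ≤ 1 + x := by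
  have h2x : (2:ℝ)^x = Real.exp (Real.log 2 * x) := Real.rpow_def_of_pos two_pos x
  have conv := convexOn_exp.2 (Set.mem_univ (0:ℝ)) (Set.mem_univ (Real.log 2))
    (by linarith : (0:ℝ) ≤ 1 - x) hx0 (by ring)
  simp only [smul_eq_mul, mul_zero, zero_add, Real.exp_zero, mul_one,
    Real.exp_log two_pos] at conv
  rw [h2x, mul_comm]
  linarith

theorem myKey (b : ℝ) (hb : 0 < b) (D K N i : ℕ) (SNR : ℝ)
    (hD : 8 ≤ D) (hK1 : 1 ≤ K) (hK2 : 2*K ≤ D) (hN : 1 ≤ N) (hSNR : 0 < SNR)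
    (hc : (5/b) * Real.logb 2 D ≤ SNR)
    (hCN : 30 * (K:ℝ) * Real.logb 2 ((D:ℝ)/(K:ℝ)) ≤ (N:ℝ))
    (hi1 : 1 ≤ i) (hiK : i ≤ K) :
    (3/2)*(i:ℝ) + Real.logb 2 D + Real.logb 2 (((D-K).choose i * K.choose i : ℕ) : ℝ) ≤
      ((N:ℝ)/2) * Real.logb 2 (1 + 2*b*(i:ℝ)*SNR/(N:ℝ)) := by
  have hNpos : (0:ℝ) < N := by exact_mod_cast hN
  have hKpos : (0:ℝ) < K := by exact_mod_cast hK1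
  have hiR : (1:ℝ) ≤ (i:ℝ) := by exact_mod_cast hi1
  have hiKR : (i:ℝ) ≤ (K:ℝ) := by exact_mod_cast hiK
  have hDR : (8:ℝ) ≤ (D:ℝ) := by exact_mod_cast hD
  set x : ℝ := 2*b*(i:ℝ)*SNR/(N:ℝ) with hxdef
  have hx0 : 0 < x := by positivity
  set lD : ℝ := Real.logb 2 D with hlDdef
  have hlD : 3 ≤ lD := by
    have h8 : Real.logb 2 (8:ℝ) = 3 := by
      rw [show (8:ℝ) = 2^(3:ℕ) by norm_num, Real.logb_pow,
        Real.logb_self_eq_one one_lt_two]; ring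
    rw [hlDdef, ← h8]
    exact Real.logb_le_logb_of_le one_lt_two (by norm_num) hDR
  set B : ℕ := (D-K).choose i * K.choose i with hBdef
  have hBpos : 0 < B := Nat.mul_pos (Nat.choose_pos (by omega)) (Nat.choose_pos hiK)
  have hBR : (1:ℝ) ≤ (B:ℝ) := by exact_mod_cast hBpos
  rcases le_or_gt x 1 with hx1 | hx1
  · -- Case A : x ≤ 1
    have hlog : x ≤ Real.logb 2 (1+x) := by
      rw [Real.le_logb_iff_rpow_le one_lt_two (by linarith)]
      exact myRpowLe x hx0.le hx1
    have hRHS : 5*(i:ℝ)*lD ≤ ((N:ℝ)/2) * x := by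
      have e1 : ((N:ℝ)/2) * x = b*(i:ℝ)*SNR := by
        rw [hxdef]; field_simp
      rw [e1]
      calc 5*(i:ℝ)*lD = b*(i:ℝ)*((5/b)*lD) := by field_simp
        _ ≤ b*(i:ℝ)*SNR := by
            apply mul_le_mul_of_nonneg_left hc (by positivity)
    have hBle : Real.logb 2 (B:ℝ) ≤ 2*(i:ℝ)*lD := by
      have h1 : B ≤ D^(2*i) := by
        calc B ≤ (D-K)^i * K^i :=
              Nat.mul_le_mul (Nat.choose_le_pow _ _) (Nat.choose_le_pow _ _)
          _ ≤ D^i * D^i := Nat.mul_le_mul (Nat.pow_le_pow_left (by omega) _)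
              (Nat.pow_le_pow_left (by omega) _)
          _ = D^(2*i) := by rw [← pow_add]; ring_nf
      calc Real.logb 2 (B:ℝ) ≤ Real.logb 2 ((D:ℝ)^(2*i)) := by
            apply Real.logb_le_logb_of_le one_lt_two (by exact_mod_cast hBpos)
            exact_mod_cast h1
        _ = 2*(i:ℝ)*lD := by rw [Real.logb_pow]; push_cast; ring
    have hmono : ((N:ℝ)/2) * x ≤ ((N:ℝ)/2) * Real.logb 2 (1+x) := by
      apply mul_le_mul_of_nonneg_left hlog (by positivity)
    nlinarith [mul_nonneg (sub_nonneg.2 hiR) (by linarith : (0:ℝ) ≤ lD),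
      mul_nonneg (by linarith : (0:ℝ) ≤ (i:ℝ)) (sub_nonneg.2 hlD)]
  · -- Case B : 1 < x
    have hlog : 1 ≤ Real.logb 2 (1+x) := by
      calc (1:ℝ) = Real.logb 2 2 := (Real.logb_self_eq_one one_lt_two).symm
        _ ≤ Real.logb 2 (1+x) :=
            Real.logb_le_logb_of_le one_lt_two two_pos (by linarith)
    set T : ℝ := Real.logb 2 ((D:ℝ)/(K:ℝ)) with hTdef
    have hDK2 : (2:ℝ) ≤ (D:ℝ)/(K:ℝ) := by
      rw [le_div_iff₀ hKpos]
      exact_mod_cast hK2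
    have hT : 1 ≤ T := by
      calc (1:ℝ) = Real.logb 2 2 := (Real.logb_self_eq_one one_lt_two).symm
        _ ≤ T := Real.logb_le_logb_of_le one_lt_two two_pos hDK2
    have hlK : Real.logb 2 (K:ℝ) ≤ (K:ℝ) := myLogbTwoNatLe K
    have hlDT : lD = T + Real.logb 2 (K:ℝ) := by
      rw [hTdef, Real.logb_div (by positivity) (by positivity), hlDdef]; ring
    have hKT : (K:ℝ) ≤ (K:ℝ)*T := le_mul_of_one_le_right hKpos.le hT
    have hTKT : T ≤ (K:ℝ)*T := by
      nlinarith
    -- binomial bound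
    have hchoose : Real.logb 2 (D.choose K : ℝ) ≤ (K:ℝ)*T + (3/2)*(K:ℝ) := by
      have h1 : (D.choose K : ℝ) ≤ ((D:ℝ)^K) / (K.factorial : ℝ) := by
        have := Nat.choose_le_pow_div (α := ℝ) K D
        simpa using this
      have h2 : (K:ℝ)^K ≤ (K.factorial : ℝ) * Real.exp K := myPowSelfLe K
      have hfac : (0:ℝ) < (K.factorial : ℝ) := by exact_mod_cast K.factorial_pos
      have h3 : (D.choose K : ℝ) ≤ ((D:ℝ)/(K:ℝ))^K * (Real.exp 1)^K := by
        have h4 : (D.choose K : ℝ) * (K:ℝ)^K ≤ (D:ℝ)^K * Real.exp K := by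
          calc (D.choose K : ℝ) * (K:ℝ)^K
              ≤ (((D:ℝ)^K) / (K.factorial : ℝ)) * ((K.factorial : ℝ) * Real.exp K) := by
                apply mul_le_mul h1 h2 (by positivity) (by positivity)
            _ = (D:ℝ)^K * Real.exp K := by field_simp
        have h5 : Real.exp (K:ℝ) = (Real.exp 1)^K := by
          rw [← Real.exp_nat_mul, mul_one]
        have hKpow : (0:ℝ) < (K:ℝ)^K := by positivity
        rw [div_pow, div_mul_eq_mul_div, le_div_iff₀ hKpow]
        calc (D.choose K : ℝ) * (K:ℝ)^K ≤ (D:ℝ)^K * Real.exp (K:ℝ) := h4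
          _ = (D:ℝ)^K * (Real.exp 1)^K := by rw [h5]
      calc Real.logb 2 (D.choose K : ℝ)
          ≤ Real.logb 2 (((D:ℝ)/(K:ℝ))^K * (Real.exp 1)^K) := by
            apply Real.logb_le_logb_of_le one_lt_two
              (by exact_mod_cast Nat.choose_pos (by omega : K ≤ D)) h3
        _ = (K:ℝ)*T + (K:ℝ)*Real.logb 2 (Real.exp 1) := by
            rw [Real.logb_mul (by positivity) (by positivity), Real.logb_pow, Real.logb_pow]
        _ ≤ (K:ℝ)*T + (3/2)*(K:ℝ) := by
            have h6 := mul_le_mul_of_nonneg_left myLogbE hKpos.le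
            linarith
    have hBle : Real.logb 2 (B:ℝ) ≤ (7/2)*((K:ℝ)*T) := by
      have h1 : B ≤ D.choose K * 2^K := by
        apply Nat.mul_le_mul _ (myChooseLeTwoPow K i)
        calc (D-K).choose i ≤ D.choose i := Nat.choose_le_choose i (by omega)
          _ ≤ D.choose K := myChooseMono hiK hK2
      calc Real.logb 2 (B:ℝ) ≤ Real.logb 2 ((D.choose K * 2^K : ℕ) : ℝ) := by
            apply Real.logb_le_logb_of_le one_lt_two (by exact_mod_cast hBpos)
            exact_mod_cast h1
        _ = Real.logb 2 (D.choose K : ℝ) + (K:ℝ) := by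
            push_cast
            rw [Real.logb_mul (by exact_mod_cast (Nat.choose_pos (by omega : K ≤ D)).ne')
              (by positivity), Real.logb_pow, Real.logb_self_eq_one one_lt_two]
            ring
        _ ≤ ((K:ℝ)*T + (3/2)*(K:ℝ)) + (K:ℝ) := by linarith
        _ ≤ (7/2)*((K:ℝ)*T) := by linarith
    have hN2 : 15*((K:ℝ)*T) ≤ (N:ℝ)/2 := by linarith
    have hRHS : (N:ℝ)/2 ≤ ((N:ℝ)/2) * Real.logb 2 (1+x) := by
      calc (N:ℝ)/2 = ((N:ℝ)/2)*1 := (mul_one _).symm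
        _ ≤ ((N:ℝ)/2) * Real.logb 2 (1+x) :=
            mul_le_mul_of_nonneg_left hlog (by positivity)
    have hLHS1 : (3/2)*(i:ℝ) ≤ (3/2)*((K:ℝ)*T) := by linarith
    have hLHS2 : lD ≤ 2*((K:ℝ)*T) := by linarith
    linarith

theorem myGeom (K : ℕ) : ∑ i ∈ Finset.Icc 1 K, ((1:ℝ)/2)^i = 1 - (1/2)^K := by
  induction K with
  | zero => simp
  | succ K ih =>
    rw [Finset.sum_Icc_succ_top (by omega : 1 ≤ K+1), ih]
    ring

theorem statement17 (ρ σ : ℝ) (hρ : ρ ∈ Set.Ico (0:ℝ) 1) (hσ : 0 < σ) :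
    ∃ c > (0:ℝ), ∃ C > (0:ℝ), ∀ (K N : ℕ → ℕ) (SNR : ℕ → ℝ),
      (∀ D : ℕ, 2 ≤ D →
        1 ≤ K D ∧ 2 * K D ≤ D ∧ 1 ≤ N D ∧ 0 < SNR D ∧
          c * Real.logb 2 D ≤ SNR D ∧
          C * (K D : ℝ) * Real.logb 2 ((D : ℝ) / (K D : ℝ)) /
              Real.logb 2 (1 + (1 - ρ) * σ^2) ≤ (N D : ℝ)) →
      Filter.Tendsto (fun D : ℕ => ∑ i ∈ Finset.Icc 1 (K D),
        (2:ℝ) ^ (-(N D : ℝ) *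
          ((1/2) * Real.logb 2 (1 + (1 - ρ) * 2 * (i:ℝ) * σ^2 * SNR D / (N D : ℝ)) -
            ((i:ℝ) / (4 * (N D : ℝ))) * Real.logb 2 4 -
            (1 / (N D : ℝ)) * Real.logb 2 (((D - K D).choose i * (K D).choose i : ℕ)))))
        Filter.atTop (nhds 0) := by
  obtain ⟨hρ0, hρ1⟩ := hρ
  have hb : 0 < (1-ρ)*σ^2 := mul_pos (by linarith) (by positivity)
  set b : ℝ := (1-ρ)*σ^2 with hbdef
  have hlb : 0 < Real.logb 2 (1+b) := Real.logb_pos one_lt_two (by linarith)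
  refine ⟨5/b, by positivity, 30 * Real.logb 2 (1+b), by positivity, ?_⟩
  intro K N SNR h
  have h4 : Real.logb 2 4 = 2 := by
    rw [show (4:ℝ) = 2^(2:ℕ) by norm_num, Real.logb_pow,
      Real.logb_self_eq_one one_lt_two]; ring
  apply squeeze_zero' (g := fun D : ℕ => 1/(D:ℝ))
  · filter_upwards with D
    exact Finset.sum_nonneg fun i _ => Real.rpow_nonneg (by norm_num) _
  · filter_upwards [Filter.eventually_ge_atTop 8] with D hD8
    obtain ⟨hK1, hK2, hN1, hSNR, hc, hCN⟩ := h D (by omega)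
    have hNpos : (0:ℝ) < N D := by exact_mod_cast hN1
    have hDpos : (0:ℝ) < D := by exact_mod_cast (by omega : 0 < D)
    have hCN' : 30*(K D:ℝ)*Real.logb 2 ((D:ℝ)/(K D:ℝ)) ≤ (N D:ℝ) := by
      have e : 30 * Real.logb 2 (1+b) * (K D:ℝ) * Real.logb 2 ((D:ℝ)/(K D:ℝ)) /
          Real.logb 2 (1+b) = 30*(K D:ℝ)*Real.logb 2 ((D:ℝ)/(K D:ℝ)) := by
        field_simp
      calc 30*(K D:ℝ)*Real.logb 2 ((D:ℝ)/(K D:ℝ)) = _ := e.symm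
        _ ≤ (N D:ℝ) := hCN
    calc (∑ i ∈ Finset.Icc 1 (K D),
        (2:ℝ) ^ (-(N D : ℝ) *
          ((1/2) * Real.logb 2 (1 + (1 - ρ) * 2 * (i:ℝ) * σ^2 * SNR D / (N D : ℝ)) -
            ((i:ℝ) / (4 * (N D : ℝ))) * Real.logb 2 4 -
            (1 / (N D : ℝ)) * Real.logb 2 (((D - K D).choose i * (K D).choose i : ℕ)))))
        ≤ ∑ i ∈ Finset.Icc 1 (K D), ((1:ℝ)/2)^i * (1/(D:ℝ)) := by
          apply Finset.sum_le_sum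
          intro i hi
          obtain ⟨hi1, hiK⟩ := Finset.mem_Icc.mp hi
          have key := myKey b hb D (K D) (N D) i (SNR D) hD8 hK1 hK2 hN1 hSNR hc hCN'
            hi1 hiK
          have hxeq : 1 + (1 - ρ) * 2 * (i:ℝ) * σ^2 * SNR D / (N D : ℝ)
              = 1 + 2*b*(i:ℝ)*SNR D/(N D:ℝ) := by rw [hbdef]; ring_nf
          have hexp : -(N D : ℝ) *
              ((1/2) * Real.logb 2 (1 + (1 - ρ) * 2 * (i:ℝ) * σ^2 * SNR D / (N D : ℝ)) -
                ((i:ℝ) / (4 * (N D : ℝ))) * Real.logb 2 4 -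
                (1 / (N D : ℝ)) * Real.logb 2 (((D - K D).choose i * (K D).choose i : ℕ)))
              ≤ -(i:ℝ) - Real.logb 2 D := by
            rw [hxeq, h4]
            have halg : (N D:ℝ) *
                ((1/2) * Real.logb 2 (1 + 2*b*(i:ℝ)*SNR D/(N D:ℝ)) -
                  ((i:ℝ) / (4 * (N D : ℝ))) * 2 -
                  (1 / (N D : ℝ)) * Real.logb 2 (((D - K D).choose i * (K D).choose i : ℕ)))
                = ((N D:ℝ)/2) * Real.logb 2 (1 + 2*b*(i:ℝ)*SNR D/(N D:ℝ)) - (i:ℝ)/2 -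
                  Real.logb 2 (((D - K D).choose i * (K D).choose i : ℕ)) := by
              field_simp
              ring
            rw [neg_mul, halg]
            linarith [key]
          calc (2:ℝ) ^ (-(N D : ℝ) *
              ((1/2) * Real.logb 2 (1 + (1 - ρ) * 2 * (i:ℝ) * σ^2 * SNR D / (N D : ℝ)) -
                ((i:ℝ) / (4 * (N D : ℝ))) * Real.logb 2 4 -
                (1 / (N D : ℝ)) * Real.logb 2 (((D - K D).choose i * (K D).choose i : ℕ))))
              ≤ (2:ℝ) ^ (-(i:ℝ) - Real.logb 2 D) :=
                Real.rpow_le_rpow_of_exponent_le one_le_two hexp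
            _ = ((1:ℝ)/2)^i * (1/(D:ℝ)) := by
                rw [sub_eq_add_neg, Real.rpow_add two_pos, Real.rpow_neg (by norm_num),
                  Real.rpow_neg (by norm_num), Real.rpow_natCast,
                  Real.rpow_logb two_pos (by norm_num) (by positivity)]
                rw [one_div, one_div, inv_pow]
      _ = (∑ i ∈ Finset.Icc 1 (K D), ((1:ℝ)/2)^i) * (1/(D:ℝ)) := by
          rw [Finset.sum_mul]
      _ ≤ 1 * (1/(D:ℝ)) := by
          apply mul_le_mul_of_nonneg_right _ (by positivity)
          rw [myGeom]
          have : (0:ℝ) ≤ (1/2)^(K D) := by positivity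
          linarith
      _ = 1/(D:ℝ) := one_mul _
  · exact tendsto_one_div_atTop_nhds_zero_nat
end
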